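/- arXiv:2307.08680 — 8 statements merged into one kernel-verified Lean document; each statement's English description precedes it below -/
import Mathlib

section
/- Let n ≥ 2 and 2 ≤ r ≤ n − 1. If G is a simple graph on n vertices in which every vertex has degree at most r, then the 𝔽₂-rank of the augmented adjacency matrix of G satisfies rank_{𝔽₂}(Ā(G)) ≥ ⌊n/(r+1)⌋. -/
open Classical in
/-- The augmented adjacency matrix of a simple graph on `Fin n` over `𝔽₂ = ZMod 2`. -/
noncomputable def augAdj {n : ℕ} (G : SimpleGraph (Fin n)) :
    Matrix (Fin n) (Fin n) (ZMod 2) :=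
  fun u v => if u = v ∨ G.Adj u v then 1 else 0

/-- If every vertex of `G` has degree at most `r`, then the `𝔽₂`-rank of the
augmented adjacency matrix is at least `⌊n / (r + 1)⌋`. -/
theorem rank_augAdj_ge_of_degree_le {n r : ℕ} (hn : 2 ≤ n) (hr : 2 ≤ r)
    (hrn : r ≤ n - 1) (G : SimpleGraph (Fin n)) [DecidableRel G.Adj]
    (hdeg : ∀ v, G.degree v ≤ r) :
    n / (r + 1) ≤ (augAdj G).rank := by
  classical
  set M : Matrix (Fin n) (Fin n) (ZMod 2) := augAdj G with hM
  -- Columns of M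
  obtain ⟨b, hbsub, hbspan, hbli⟩ :=
    exists_linearIndependent (ZMod 2) (Set.range M.transpose)
  haveI : Fintype b := (Set.toFinite b).fintype
  have hrank : M.rank = b.toFinset.card := by
    rw [Matrix.rank, Matrix.range_mulVecLin]
    change Module.finrank (ZMod 2) (Submodule.span (ZMod 2) (Set.range M.transpose)) = _
    rw [← hbspan,
      finrank_span_set_eq_card hbli]
  -- every column is in the span of b
  have hcol_mem : ∀ j : Fin n, M.transpose j ∈ Submodule.span (ZMod 2) b := by
    intro j
    rw [hbspan]
    exact Submodule.subset_span ⟨j, rfl⟩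
  -- vanishing: if all of b vanish at i, so does anything in the span
  have hvanish : ∀ i : Fin n, ∀ v ∈ Submodule.span (ZMod 2) b,
      (∀ x ∈ b, x i = 0) → v i = 0 := by
    intro i v hv h0
    have : Submodule.span (ZMod 2) b ≤ LinearMap.ker (LinearMap.proj (R := ZMod 2)
        (φ := fun _ : Fin n => ZMod 2) i) := by
      rw [Submodule.span_le]
      intro x hx
      simpa using h0 x hx
    exact this hv
  -- each vertex is in the support of some element of b
  have hcover : ∀ i : Fin n, ∃ x ∈ b, x i ≠ 0 := by
    intro i
    by_contra h
    push_neg at h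
    have := hvanish i (M.transpose i) (hcol_mem i) h
    simp [hM, augAdj, Matrix.transpose_apply] at this
  -- support of each element of b has size ≤ r + 1
  have hsupp : ∀ x ∈ b, (Finset.univ.filter (fun i => x i ≠ 0)).card ≤ r + 1 := by
    intro x hx
    obtain ⟨j, rfl⟩ := hbsub hx
    have hsub : (Finset.univ.filter (fun i => M.transpose j i ≠ 0)) ⊆
        insert j (G.neighborFinset j) := by
      intro i hi
      simp only [Finset.mem_filter, Matrix.transpose_apply, hM, augAdj] at hi
      rcases hi with ⟨-, hi⟩
      by_cases hij : i = j ∨ G.Adj i j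
      · rcases hij with h1 | h1
        · simp [h1]
        · simp [Finset.mem_insert, SimpleGraph.mem_neighborFinset, h1.symm]
      · simp [hij] at hi
    calc (Finset.univ.filter (fun i => M.transpose j i ≠ 0)).card
        ≤ (insert j (G.neighborFinset j)).card := Finset.card_le_card hsub
      _ ≤ (G.neighborFinset j).card + 1 := Finset.card_insert_le _ _
      _ = G.degree j + 1 := by rw [SimpleGraph.card_neighborFinset_eq_degree]
      _ ≤ r + 1 := by have := hdeg j; omega
  -- counting
  have hcount : n ≤ b.toFinset.card * (r + 1) := by
    have huniv : (Finset.univ : Finset (Fin n)) ⊆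
        b.toFinset.biUnion (fun x => Finset.univ.filter (fun i => x i ≠ 0)) := by
      intro i _
      obtain ⟨x, hx, hxi⟩ := hcover i
      exact Finset.mem_biUnion.2 ⟨x, Set.mem_toFinset.2 hx, by simp [hxi]⟩
    calc n = (Finset.univ : Finset (Fin n)).card := by simp
      _ ≤ (b.toFinset.biUnion (fun x => Finset.univ.filter (fun i => x i ≠ 0))).card :=
          Finset.card_le_card huniv
      _ ≤ ∑ x ∈ b.toFinset, (Finset.univ.filter (fun i => x i ≠ 0)).card :=
          Finset.card_biUnion_le
      _ ≤ ∑ _x ∈ b.toFinset, (r + 1) :=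
          Finset.sum_le_sum (fun x hx => hsupp x (Set.mem_toFinset.1 hx))
      _ = b.toFinset.card * (r + 1) := by rw [Finset.sum_const, smul_eq_mul]
  rw [hrank]
  have := Nat.div_le_div_right (c := r + 1) hcount
  rwa [Nat.mul_div_cancel _ (by omega)] at this
end

section
/- Let A be a symmetric n×n matrix over 𝔽₂ with all diagonal entries equal to 1, such that every row of A has at most r+1 nonzero entries. Then rank_{𝔽₂}(A) ≥ ⌊n/(r+1)⌋. -/
open Matrix


/-- A symmetric binary `n × n` matrix with all diagonal entries `1` in which every row
has at most `r + 1` nonzero entries has `𝔽₂`-rank at least `⌊n / (r + 1)⌋`. -/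
theorem rank_ge_of_symm_unit_diag_row_weight {n r : ℕ}
    (A : Matrix (Fin n) (Fin n) (ZMod 2))
    (hsymm : A.IsSymm)
    (hdiag : ∀ i, A i i = 1)
    (hrow : ∀ i, (Finset.univ.filter fun j => A i j ≠ 0).card ≤ r + 1) :
    n / (r + 1) ≤ A.rank := by
  classical
  obtain ⟨b, hb, hspan, hind⟩ := exists_linearIndependent (ZMod 2) (Set.range Aᵀ)
  have hbfin : b.Finite := (Set.finite_range Aᵀ).subset hb
  have : Fintype b := hbfin.fintype
  set s : Finset (Fin n → ZMod 2) := hbfin.toFinset with hsdef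
  have hrank : A.rank = s.card := by
    rw [Matrix.rank, Matrix.range_mulVecLin]
    change Module.finrank (ZMod 2) ↥(Submodule.span (ZMod 2) (Set.range Aᵀ)) = s.card
    rw [← hspan]
    rw [finrank_span_set_eq_card hind, hsdef, hbfin.toFinset_eq_toFinset]
  set S : Finset (Fin n) := s.biUnion (fun v => Finset.univ.filter fun j => v j ≠ 0) with hS
  have hsupp : ∀ v ∈ Submodule.span (ZMod 2) b, ∀ j, v j ≠ 0 → j ∈ S := by
    intro v hv
    induction hv using Submodule.span_induction with
    | mem x hx =>
      intro j hj
      exact Finset.mem_biUnion.2 ⟨x, hbfin.mem_toFinset.2 hx, Finset.mem_filter.2 ⟨Finset.mem_univ _, hj⟩⟩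
    | zero => intro j hj; exact absurd rfl hj
    | add x y hx hy ihx ihy =>
      intro j hj
      by_cases h : x j ≠ 0
      · exact ihx j h
      · push_neg at h
        exact ihy j (by simpa [Pi.add_apply, h] using hj)
    | smul c x hx ihx =>
      intro j hj
      exact ihx j fun h => hj (by simp [h])
  have hmem : ∀ i : Fin n, i ∈ S := by
    intro i
    have hcol : Aᵀ i ∈ Submodule.span (ZMod 2) b := by
      rw [hspan]
      exact Submodule.subset_span ⟨i, rfl⟩
    have : (Aᵀ i) i ≠ 0 := by
      simp [Matrix.transpose_apply, hdiag i]
    exact hsupp _ hcol i this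
  have hcardS : n ≤ S.card := by
    have : Finset.univ ⊆ S := fun i _ => hmem i
    calc n = (Finset.univ : Finset (Fin n)).card := by simp
    _ ≤ S.card := Finset.card_le_card this
  have hSbound : S.card ≤ s.card * (r + 1) := by
    calc S.card ≤ ∑ v ∈ s, (Finset.univ.filter fun j => v j ≠ 0).card :=
          Finset.card_biUnion_le
    _ ≤ ∑ v ∈ s, (r + 1) := by
          apply Finset.sum_le_sum
          intro v hv
          obtain ⟨k, rfl⟩ := hb (hbfin.mem_toFinset.1 hv)
          have : (Finset.univ.filter fun j => Aᵀ k j ≠ 0)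
              = Finset.univ.filter fun j => A k j ≠ 0 := by
            apply Finset.filter_congr
            intro j _
            rw [Matrix.transpose_apply, hsymm.apply j k]
          rw [this]
          exact hrow k
    _ = s.card * (r + 1) := by rw [Finset.sum_const, smul_eq_mul]
  have hn : n ≤ A.rank * (r + 1) := by rw [hrank]; exact hcardS.trans hSbound
  calc n / (r + 1) ≤ A.rank * (r + 1) / (r + 1) := Nat.div_le_div_right hn
  _ = A.rank := Nat.mul_div_cancel _ (Nat.succ_pos r)
end

section
/- For every n ≥ 2 and every 2 ≤ r ≤ n − 1 there exists a simple graph G on n vertices with no isolated vertices, in which every vertex has degree at most r, such that rank_{𝔽₂}(Ā(G)) = ⌈n/(r+1)⌉; consequently the binary storage code of G with parity repair has rate 1 − (1/n)·⌈n/(r+1)⌉. -/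
open Classical in
/-- For every `n ≥ 2` and `2 ≤ r ≤ n - 1`, there exists a graph on `n` vertices without
isolated vertices, with maximum degree at most `r`, whose augmented adjacency matrix has
`𝔽₂`-rank exactly `⌈n / (r + 1)⌉` (written `(n + r) / (r + 1)` in natural division);
consequently the associated binary storage code has rate `1 - ⌈n / (r + 1)⌉ / n`. -/
theorem exists_graph_rank_augAdj_eq_ceil {n r : ℕ} (hn : 2 ≤ n) (hr : 2 ≤ r)
    (hrn : r ≤ n - 1) :
    ∃ G : SimpleGraph (Fin n),
      (∀ v, 0 < G.degree v) ∧
      (∀ v, G.degree v ≤ r) ∧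
      (augAdj G).rank = (n + r) / (r + 1) ∧
      (1 : ℝ) - ((augAdj G).rank : ℝ) / n
        = 1 - (((n + r) / (r + 1) : ℕ) : ℝ) / n := by
  set k := (n + r) / (r + 1) with hkdef
  have hr1 : 0 < r + 1 := Nat.succ_pos r
  have hk1 : 1 ≤ k := (Nat.one_le_div_iff hr1).mpr (by omega)
  obtain ⟨m, hm⟩ : ∃ m, k = m + 1 := ⟨k - 1, by omega⟩
  -- arithmetic facts
  have hle : m * r + (m + r + 1) ≤ n + r := by
    have h := Nat.div_mul_le_self (n + r) (r + 1)
    rw [← hkdef, hm] at h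
    calc m * r + (m + r + 1) = (m + 1) * (r + 1) := by ring
    _ ≤ n + r := h
  have hub : n ≤ m * r + (m + r + 1) := by
    have h1 := Nat.div_add_mod (n + r) (r + 1)
    have h2 : (n + r) % (r + 1) < r + 1 := Nat.mod_lt _ hr1
    rw [← hkdef] at h1
    have h3 : (r + 1) * k = m * r + (m + r + 1) := by rw [hm]; ring
    omega
  have hmr : m * 2 ≤ m * r := Nat.mul_le_mul_left m hr
  have h2kn : 2 * k ≤ n := by
    rw [hm]
    rcases Nat.eq_zero_or_pos m with h | h
    · omega
    · omega
  have hk0 : 0 < k := hk1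
  have hkn : k ≤ n := by omega
  have hdivlt : (n - 1) / k < r + 1 := by
    rw [Nat.div_lt_iff_lt_mul hk0]
    have : (r + 1) * k = m * r + (m + r + 1) := by rw [hm]; ring
    omega
  -- the graph: cliques on residue classes mod k
  set G : SimpleGraph (Fin n) :=
    SimpleGraph.fromRel (fun u v => u.val % k = v.val % k) with hGdef
  have hiff : ∀ u v : Fin n, (u = v ∨ G.Adj u v) ↔ u.val % k = v.val % k := by
    intro u v
    rw [hGdef]
    simp only [SimpleGraph.fromRel_adj]
    constructor
    · rintro (rfl | ⟨_, h | h⟩)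
      · rfl
      · exact h
      · exact h.symm
    · intro h
      by_cases huv : u = v
      · exact Or.inl huv
      · exact Or.inr ⟨huv, Or.inl h⟩
  have hM : ∀ u v : Fin n,
      augAdj G u v = if u.val % k = v.val % k then (1 : ZMod 2) else 0 := by
    intro u v
    simp only [augAdj]
    convert if_congr (hiff u v) rfl rfl
  -- positive degree
  have hdegpos : ∀ v : Fin n, 0 < G.degree v := by
    intro v
    rw [G.degree_pos_iff_exists_adj]
    rcases Nat.lt_or_ge v.val k with h | h
    · refine ⟨⟨v.val + k, by omega⟩, ?_⟩
      rw [hGdef]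
      simp only [SimpleGraph.fromRel_adj]
      refine ⟨?_, Or.inl ?_⟩
      · intro hvv
        have := congrArg Fin.val hvv
        simp only at this
        omega
      · simp [Nat.add_mod_right]
    · refine ⟨⟨v.val % k, lt_of_lt_of_le (Nat.mod_lt _ hk0) hkn⟩, ?_⟩
      rw [hGdef]
      simp only [SimpleGraph.fromRel_adj]
      refine ⟨?_, Or.inl ?_⟩
      · intro hvv
        have := congrArg Fin.val hvv
        simp only at this
        have := Nat.mod_lt v.val hk0
        omega
      · show v.val % k = (v.val % k) % k
        rw [Nat.mod_mod_of_dvd _ dvd_rfl]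
  -- degree bound
  have hdegle : ∀ v : Fin n, G.degree v ≤ r := by
    intro v
    classical
    let S : Finset (Fin n) := Finset.univ.filter (fun u : Fin n => u.val % k = v.val % k)
    have hmem : ∀ u : Fin n, u ∈ S ↔ u.val % k = v.val % k := by
      intro u; simp [S]
    have hinj : Set.InjOn (fun u : Fin n => u.val / k) ↑S := by
      intro a ha b hb hab
      rw [Finset.mem_coe, hmem] at ha hb
      have hab' : a.val / k = b.val / k := hab
      have hval : a.val = b.val := by
        conv_lhs => rw [← Nat.div_add_mod a.val k]
        conv_rhs => rw [← Nat.div_add_mod b.val k]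
        rw [hab', ha, hb]
      exact Fin.ext hval
    have hmaps : ∀ u ∈ S, (fun u : Fin n => u.val / k) u ∈ Finset.range (r + 1) := by
      intro u _
      simp only [Finset.mem_range]
      show u.val / k < r + 1
      have h1 : u.val / k ≤ (n - 1) / k := Nat.div_le_div_right (by omega)
      omega
    have hcard : S.card ≤ r + 1 := by
      have h := Finset.card_le_card_of_injOn _ hmaps hinj
      simpa using h
    have hvS : v ∈ S := (hmem v).mpr rfl
    have hsub : G.neighborFinset v ⊆ S.erase v := by
      intro u hu
      rw [SimpleGraph.mem_neighborFinset] at hu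
      refine Finset.mem_erase.mpr ⟨(G.ne_of_adj hu).symm, ?_⟩
      exact (hmem u).mpr ((hiff v u).mp (Or.inr hu)).symm
    calc G.degree v = (G.neighborFinset v).card := rfl
      _ ≤ (S.erase v).card := Finset.card_le_card hsub
      _ = S.card - 1 := Finset.card_erase_of_mem hvS
      _ ≤ r := by omega
  -- rank computation
  set g : Fin k → (Fin n → ZMod 2) :=
    fun j u => if u.val % k = j.val then 1 else 0 with hgdef
  have hgind : LinearIndependent (ZMod 2) g := by
    rw [Fintype.linearIndependent_iff]
    intro c hc j
    have hjn : (j : ℕ) < n := lt_of_lt_of_le j.2 hkn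
    have hev := congrFun hc ⟨j, hjn⟩
    simp only [Finset.sum_apply, Pi.smul_apply, smul_eq_mul, Pi.zero_apply, hgdef] at hev
    rw [Finset.sum_eq_single j] at hev
    · simpa [Nat.mod_eq_of_lt j.2] using hev
    · intro i _ hij
      have hne : ¬ ((j : ℕ) % k = (i : ℕ)) := by
        rw [Nat.mod_eq_of_lt j.2]
        exact fun h => hij (Fin.ext h.symm)
      simp [hne]
    · intro h
      exact absurd (Finset.mem_univ j) h
  have hcol : ∀ v : Fin n, (augAdj G).transpose v = g ⟨v.val % k, Nat.mod_lt _ hk0⟩ := by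
    intro v
    funext u
    rw [Matrix.transpose_apply, hM]
  have hrange : Set.range (augAdj G).transpose = Set.range g := by
    apply Set.Subset.antisymm
    · rintro f ⟨v, rfl⟩
      exact ⟨_, (hcol v).symm⟩
    · rintro f ⟨j, rfl⟩
      refine ⟨⟨j.val, lt_of_lt_of_le j.2 hkn⟩, ?_⟩
      rw [hcol]
      exact congrArg g (Fin.ext (Nat.mod_eq_of_lt j.2))
  have hrank : (augAdj G).rank = k := by
    rw [Matrix.rank_eq_finrank_span_cols,
      show (augAdj G).col = (augAdj G).transpose from rfl, hrange, finrank_span_eq_card hgind,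
      Fintype.card_fin]
  exact ⟨G, fun v => by convert hdegpos v, fun v => by convert hdegle v, hrank, by rw [hrank]⟩
end

section
/- For every n ≥ 2 and every 2 ≤ r ≤ n − 1 there exists a connected simple graph G on n vertices in which every vertex has degree at most r, such that rank_{𝔽₂}(Ā(G)) ≤ 3·⌈n/(r+1)⌉; consequently the binary storage code of G with parity repair has rate at least 1 − (3/n)·⌈n/(r+1)⌉. -/
namespace StorageAux

/-- number of blocks: `⌈n/(r+1)⌉` -/
def mm (n r : ℕ) : ℕ := (n + r) / (r + 1)

/-- left endpoint of block `i`: `⌈i·n/m⌉` -/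
def aa (n r : ℕ) (i : ℕ) : ℕ := (i * n + (mm n r - 1)) / mm n r

/-- block of vertex `v`: `⌊v·m/n⌋` -/
def blk (n r : ℕ) (v : ℕ) : ℕ := v * mm n r / n

section Arith

set_option linter.unusedSectionVars false
variable {n r : ℕ} (hr : 2 ≤ r) (hk : r + 1 ≤ n)
include hr hk

lemma hm1 : 1 ≤ mm n r := by
  have : r + 1 ≤ n + r := by omega
  exact Nat.one_le_div_iff (by omega) |>.2 this

lemma hmk_le : mm n r * (r + 1) ≤ n + r := Nat.div_mul_le_self _ _

lemma hn_le : n ≤ mm n r * (r + 1) := by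
  have h := Nat.div_add_mod (n + r) (r + 1)
  have h2 : (n + r) % (r + 1) < r + 1 := Nat.mod_lt _ (by omega)
  have e : (r + 1) * ((n + r) / (r + 1)) = mm n r * (r + 1) := by
    unfold mm; ring
  omega

lemma h2m : 2 * mm n r ≤ n := by
  rcases Nat.eq_zero_or_pos (mm n r - 1) with h | h
  · have := hm1 hr hk; omega
  · set M := mm n r with hM
    have h1 : M * (r + 1) ≤ n + r := hmk_le hr hk
    have h2 : 3 * (M - 1) ≤ (M - 1) * (r + 1) := by
      have : 3 ≤ r + 1 := by omega
      calc 3 * (M - 1) = (M - 1) * 3 := by ring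
        _ ≤ (M - 1) * (r + 1) := Nat.mul_le_mul_left _ this
    have h3 : (M - 1) * (r + 1) + (r + 1) = M * (r + 1) := by
      have h1M : 1 ≤ M := hm1 hr hk
      calc (M - 1) * (r + 1) + (r + 1) = (M - 1 + 1) * (r + 1) := by ring
        _ = M * (r + 1) := by rw [Nat.sub_add_cancel h1M]
    omega

lemma aa_le_iff {i v : ℕ} : aa n r i ≤ v ↔ i * n ≤ v * mm n r := by
  have hM : 0 < mm n r := hm1 hr hk
  unfold aa
  rw [Nat.div_le_iff_le_mul_add_pred hM]
  rw [Nat.mul_comm (mm n r) v]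
  omega

lemma aa_mul_le (i : ℕ) : aa n r i * mm n r ≤ i * n + (mm n r - 1) :=
  Nat.div_mul_le_self _ _

lemma aa_mono {i j : ℕ} (hij : i ≤ j) : aa n r i ≤ aa n r j := by
  rw [aa_le_iff hr hk]
  have h1 : j * n ≤ aa n r j * mm n r := (aa_le_iff hr hk).1 le_rfl
  have h2 : i * n ≤ j * n := Nat.mul_le_mul_right _ hij
  omega

lemma aa_gap_lo (i : ℕ) : aa n r i + 2 ≤ aa n r (i + 1) := by
  by_contra h
  have h' : aa n r (i + 1) ≤ aa n r i + 1 := by omega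
  have h1 := (aa_le_iff hr hk).1 h'
  have h2 := aa_mul_le hr hk (n := n) (r := r) i
  have h3 := h2m hr hk
  have hM := hm1 hr hk
  -- (i+1)*n ≤ (aa i + 1) * M ≤ i*n + M - 1 + M < i*n + n
  have : (i + 1) * n = i * n + n := by ring
  have : (aa n r i + 1) * mm n r = aa n r i * mm n r + mm n r := by ring
  omega

lemma aa_gap_hi (i : ℕ) : aa n r (i + 1) ≤ aa n r i + (r + 1) := by
  rw [aa_le_iff hr hk]
  have h1 : i * n ≤ aa n r i * mm n r := (aa_le_iff hr hk).1 le_rfl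
  have h2 : n ≤ mm n r * (r + 1) := hn_le hr hk
  have e1 : (i + 1) * n = i * n + n := by ring
  have e2 : (aa n r i + (r + 1)) * mm n r = aa n r i * mm n r + mm n r * (r + 1) := by ring
  omega

lemma aa_m : aa n r (mm n r) = n := by
  have h1 : aa n r (mm n r) ≤ n := by
    rw [aa_le_iff hr hk]; exact le_of_eq (Nat.mul_comm _ _)
  have h2 : ¬ aa n r (mm n r) ≤ n - 1 := by
    rw [aa_le_iff hr hk]
    have hM := hm1 hr hk
    have hn1 : 1 ≤ n := by omega
    have : (n - 1) * mm n r + mm n r = n * mm n r := by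
      calc (n - 1) * mm n r + mm n r = (n - 1 + 1) * mm n r := by ring
        _ = n * mm n r := by rw [Nat.sub_add_cancel hn1]
    have e : mm n r * n = n * mm n r := Nat.mul_comm _ _
    omega
  omega

lemma blk_le_iff {i v : ℕ} : i ≤ blk n r v ↔ aa n r i ≤ v := by
  have hn : 0 < n := by omega
  unfold blk
  rw [Nat.le_div_iff_mul_le hn, aa_le_iff hr hk]

lemma blk_eq_iff {i v : ℕ} : blk n r v = i ↔ aa n r i ≤ v ∧ v < aa n r (i + 1) := by
  constructor
  · intro h
    refine ⟨(blk_le_iff hr hk).1 (le_of_eq h.symm), ?_⟩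
    by_contra h'
    have := (blk_le_iff hr hk).2 (by omega : aa n r (i+1) ≤ v)
    omega
  · rintro ⟨h1, h2⟩
    have g1 := (blk_le_iff hr hk).2 h1
    have g2 : ¬ (i + 1 ≤ blk n r v) := fun h => by
      have := (blk_le_iff hr hk).1 h; omega
    omega

lemma blk_self_left (v : ℕ) : aa n r (blk n r v) ≤ v :=
  ((blk_eq_iff hr hk).1 rfl).1

lemma blk_self_right (v : ℕ) : v < aa n r (blk n r v + 1) :=
  ((blk_eq_iff hr hk).1 rfl).2

lemma blk_lt {v : ℕ} (hv : v < n) : blk n r v < mm n r := by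
  by_contra h
  have := (blk_le_iff hr hk (i := mm n r) (v := v)).1 (by omega)
  rw [aa_m hr hk] at this
  omega

lemma aa_lt_n {i : ℕ} (hi : i < mm n r) : aa n r i < n := by
  have h1 : aa n r i + 2 ≤ aa n r (i + 1) := aa_gap_lo hr hk i
  have h2 : aa n r (i + 1) ≤ aa n r (mm n r) := aa_mono hr hk (by omega)
  rw [aa_m hr hk] at h2
  omega

end Arith
end StorageAux

namespace StorageAux

def isA (n r w : ℕ) : Prop := w = aa n r (blk n r w)
def isB (n r w : ℕ) : Prop := w + 1 = aa n r (blk n r w + 1)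
def del (n r i : ℕ) : Prop := aa n r (i + 1) = aa n r i + (r + 1) ∧ 2 ≤ mm n r

def Gr (n r : ℕ) : SimpleGraph (Fin n) where
  Adj u v := u ≠ v ∧
    ((blk n r u = blk n r v ∧
        ¬(del n r (blk n r u) ∧
          ((isA n r u ∧ isB n r v) ∨ (isB n r u ∧ isA n r v)))) ∨
      ((v : ℕ) = (u : ℕ) + 1 ∧ blk n r v = blk n r u + 1) ∨
      ((u : ℕ) = (v : ℕ) + 1 ∧ blk n r u = blk n r v + 1))
  symm := by
    refine ⟨?_⟩
    rintro u v ⟨hne, h⟩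
    refine ⟨fun e => hne e.symm, ?_⟩
    rcases h with ⟨hb, hp⟩ | h | h
    · exact Or.inl ⟨hb.symm, fun ⟨hd, hq⟩ => hp ⟨by rw [hb]; exact hd, by tauto⟩⟩
    · exact Or.inr (Or.inr h)
    · exact Or.inr (Or.inl h)
  loopless := ⟨fun v h => h.1 rfl⟩

section Graph

set_option linter.unusedSectionVars false
variable {n r : ℕ} (hr : 2 ≤ r) (hk : r + 1 ≤ n)
include hr hk

lemma aa_zero : aa n r 0 = 0 := by
  have := (aa_le_iff hr hk (i := 0) (v := 0)).2 (by omega)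
  omega

lemma not_isA_isB {w : ℕ} (h1 : isA n r w) (h2 : isB n r w) : False := by
  have := aa_gap_lo hr hk (blk n r w)
  unfold isA at h1; unfold isB at h2
  omega

lemma adj_dest {v u : Fin n} (h : (Gr n r).Adj v u) :
    (blk n r v = blk n r u ∧ (u : ℕ) ≠ (v : ℕ) ∧
       aa n r (blk n r v) ≤ (u : ℕ) ∧ (u : ℕ) < aa n r (blk n r v + 1) ∧
       ¬(del n r (blk n r v) ∧
          ((isA n r v ∧ isB n r u) ∨ (isB n r v ∧ isA n r u))))
    ∨ ((u : ℕ) = (v : ℕ) + 1 ∧ isB n r v)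
    ∨ ((u : ℕ) + 1 = aa n r (blk n r v) ∧ isA n r v) := by
  change v ≠ u ∧ _ at h
  obtain ⟨hne, hcase⟩ := h
  rcases hcase with ⟨hb, hp⟩ | ⟨h1, h2⟩ | ⟨h1, h2⟩
  · left
    have l1 := blk_self_left hr hk (u : ℕ)
    have l2 := blk_self_right hr hk (u : ℕ)
    rw [← hb] at l1 l2
    exact ⟨hb, fun e => hne (Fin.ext e.symm), l1, l2, hp⟩
  · right; left
    refine ⟨h1, ?_⟩
    have l2 := blk_self_right hr hk (v : ℕ)
    have l1 : aa n r (blk n r (v : ℕ) + 1) ≤ (u : ℕ) :=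
      (blk_le_iff hr hk).1 (le_of_eq h2.symm)
    unfold isB
    omega
  · right; right
    have l2 := blk_self_right hr hk (u : ℕ)
    rw [← h2] at l2
    have l1 := blk_self_left hr hk (v : ℕ)
    unfold isA
    omega

/-- a vertex that is the top of its block, inside the block interval -/
lemma isB_of_top {u : ℕ} (hb : blk n r u = blk n r u)
    (htop : u + 1 = aa n r (blk n r u + 1)) : isB n r u := htop

lemma isB_iff_top {i u : ℕ} (hb : blk n r u = i) :
    isB n r u ↔ u + 1 = aa n r (i + 1) := by
  unfold isB; rw [hb]

lemma isA_iff_bot {i u : ℕ} (hb : blk n r u = i) :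
    isA n r u ↔ u = aa n r i := by
  unfold isA; rw [hb]

lemma adj_consec {v : Fin n} (h : (v : ℕ) + 1 < n) :
    (Gr n r).Adj v ⟨(v : ℕ) + 1, h⟩ := by
  have hne : v ≠ (⟨(v : ℕ) + 1, h⟩ : Fin n) := by
    intro e
    have := congrArg Fin.val e
    simp at this
  show v ≠ _ ∧ _
  refine ⟨hne, ?_⟩
  set w : Fin n := ⟨(v : ℕ) + 1, h⟩ with hw
  have hwv : (w : ℕ) = (v : ℕ) + 1 := rfl
  have l1 := blk_self_left hr hk (v : ℕ)
  have l2 := blk_self_right hr hk (v : ℕ)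
  by_cases hc : (v : ℕ) + 1 < aa n r (blk n r (v : ℕ) + 1)
  · -- same block
    have hbw : blk n r (w : ℕ) = blk n r (v : ℕ) := by
      rw [blk_eq_iff hr hk]
      exact ⟨by omega, by omega⟩
    left
    refine ⟨hbw.symm ▸ rfl, ?_⟩
    · rw [show blk n r (v : Fin n) = blk n r (v : ℕ) from rfl]
      rintro ⟨hd, hq⟩
      rcases hq with ⟨ha, hb⟩ | ⟨hb, ha⟩
      · -- v = aa i and w = hi - 1 with hi = lo + r + 1 : impossible since w = v + 1
        have e1 : (v : ℕ) = aa n r (blk n r (v : ℕ)) := ha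
        have e2 : (w : ℕ) + 1 = aa n r (blk n r (w : ℕ) + 1) := hb
        simp only [hbw] at e2
        have := hd.1
        omega
      · -- v is top and w = v + 1 is bottom: but same block, contradiction
        have e1 : (w : ℕ) = aa n r (blk n r (w : ℕ)) := ha
        simp only [hbw] at e1
        omega
  · -- w is the start of the next block: bridge
    have hc' : (v : ℕ) + 1 = aa n r (blk n r (v : ℕ) + 1) := by omega
    have hbw : blk n r (w : ℕ) = blk n r (v : ℕ) + 1 := by
      rw [blk_eq_iff hr hk]
      have := aa_gap_lo hr hk (blk n r (v : ℕ) + 1)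
      exact ⟨by omega, by omega⟩
    right; left
    exact ⟨rfl, hbw⟩

lemma Gr_connected (hn2 : 2 ≤ n) : (Gr n r).Connected := by
  have hn0 : 0 < n := by omega
  rw [SimpleGraph.connected_iff]
  constructor
  · intro u v
    have key : ∀ (j : ℕ) (hj : j < n), (Gr n r).Reachable ⟨0, hn0⟩ ⟨j, hj⟩ := by
      intro j
      induction j with
      | zero => intro hj; exact SimpleGraph.Reachable.refl _
      | succ j ih =>
        intro hj
        have hj' : j < n := by omega
        have step : (Gr n r).Adj ⟨j, hj'⟩ ⟨j + 1, hj⟩ := adj_consec hr hk hj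
        exact (ih hj').trans step.reachable
    have h1 := key (u : ℕ) u.isLt
    have h2 := key (v : ℕ) v.isLt
    simpa using h1.symm.trans h2
  · exact ⟨⟨0, hn0⟩⟩

open Classical in
lemma degree_le_of (v : Fin n) (N : Finset ℕ)
    (hmaps : ∀ u : Fin n, (Gr n r).Adj v u → (u : ℕ) ∈ N) (hcard : N.card ≤ r) :
    (Gr n r).degree v ≤ r := by
  classical
  rw [← SimpleGraph.card_neighborFinset_eq_degree]
  refine le_trans (Finset.card_le_card_of_injOn (fun u => (u : ℕ)) ?_ ?_) hcard
  · intro u hu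
    exact hmaps u (((Gr n r).mem_neighborFinset v u).1 hu)
  · intro x _ y _ hxy
    exact Fin.ext hxy

open Classical in
lemma Gr_degree_le (v : Fin n) : (Gr n r).degree v ≤ r := by
  have f1 : aa n r (blk n r (v:ℕ)) ≤ (v:ℕ) := blk_self_left hr hk _
  have f2 : (v:ℕ) < aa n r (blk n r (v:ℕ) + 1) := blk_self_right hr hk _
  have f3 : aa n r (blk n r (v:ℕ)) + 2 ≤ aa n r (blk n r (v:ℕ) + 1) := aa_gap_lo hr hk _
  have f4 : aa n r (blk n r (v:ℕ) + 1) ≤ aa n r (blk n r (v:ℕ)) + (r + 1) := aa_gap_hi hr hk _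
  have f5 : blk n r (v:ℕ) < mm n r := blk_lt hr hk v.isLt
  have f6 : aa n r (blk n r (v:ℕ) + 1) ≤ n := by
    have h1 : aa n r (blk n r (v:ℕ) + 1) ≤ aa n r (mm n r) := aa_mono hr hk (by omega)
    rw [aa_m hr hk] at h1; exact h1
  have hvmem : (v:ℕ) ∈ Finset.Ico (aa n r (blk n r (v:ℕ))) (aa n r (blk n r (v:ℕ) + 1)) :=
    Finset.mem_Ico.2 ⟨f1, f2⟩
  have hcard0 : ((Finset.Ico (aa n r (blk n r (v:ℕ))) (aa n r (blk n r (v:ℕ) + 1))).erase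
      (v:ℕ)).card = aa n r (blk n r (v:ℕ) + 1) - aa n r (blk n r (v:ℕ)) - 1 := by
    rw [Finset.card_erase_of_mem hvmem, Nat.card_Ico]
  have hsb : ∀ u : Fin n, (u:ℕ) ≠ (v:ℕ) →
      aa n r (blk n r (v:ℕ)) ≤ (u:ℕ) → (u:ℕ) < aa n r (blk n r (v:ℕ) + 1) →
      (u:ℕ) ∈ (Finset.Ico (aa n r (blk n r (v:ℕ))) (aa n r (blk n r (v:ℕ) + 1))).erase (v:ℕ) :=
    fun u hne h1 h2 => Finset.mem_erase.2 ⟨hne, Finset.mem_Ico.2 ⟨h1, h2⟩⟩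
  by_cases hA : isA n r (v:ℕ)
  · have hB : ¬ isB n r (v:ℕ) := fun h => not_isA_isB hr hk hA h
    unfold isA at hA
    by_cases hi0 : blk n r (v:ℕ) = 0
    · refine degree_le_of hr hk v _ ?_ (le_trans (le_of_eq hcard0) (by omega))
      intro u hadj
      rcases adj_dest hr hk hadj with ⟨_, hne, h1, h2, _⟩ | ⟨_, hBv⟩ | ⟨hu1, _⟩
      · exact hsb u hne h1 h2
      · exact absurd hBv hB
      · exfalso; rw [hi0, aa_zero hr hk] at hu1; omega
    · have hm2 : 2 ≤ mm n r := by omega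
      by_cases hd : aa n r (blk n r (v:ℕ) + 1) = aa n r (blk n r (v:ℕ)) + (r + 1)
      · have hdel : del n r (blk n r (v:ℕ)) := ⟨hd, hm2⟩
        refine degree_le_of hr hk v
          ((((Finset.Ico (aa n r (blk n r (v:ℕ))) (aa n r (blk n r (v:ℕ) + 1))).erase
            (v:ℕ)).erase (aa n r (blk n r (v:ℕ) + 1) - 1)) ∪ {aa n r (blk n r (v:ℕ)) - 1})
          ?_ ?_
        · intro u hadj
          rcases adj_dest hr hk hadj with ⟨hb, hne, h1, h2, hp⟩ | ⟨_, hBv⟩ | ⟨hu1, _⟩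
          · refine Finset.mem_union_left _ (Finset.mem_erase.2 ⟨?_, hsb u hne h1 h2⟩)
            intro htop
            have hBu : isB n r (u:ℕ) := by
              unfold isB; rw [← hb]; omega
            exact hp ⟨hdel, Or.inl ⟨hA, hBu⟩⟩
          · exact absurd hBv hB
          · exact Finset.mem_union_right _ (Finset.mem_singleton.2 (by omega))
        · refine le_trans (Finset.card_union_le _ _) ?_
          have hmem2 : (aa n r (blk n r (v:ℕ) + 1) - 1) ∈
              (Finset.Ico (aa n r (blk n r (v:ℕ))) (aa n r (blk n r (v:ℕ) + 1))).erase (v:ℕ) := by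
            refine Finset.mem_erase.2 ⟨by omega, Finset.mem_Ico.2 ⟨by omega, by omega⟩⟩
          rw [Finset.card_erase_of_mem hmem2, hcard0, Finset.card_singleton]
          omega
      · refine degree_le_of hr hk v
          (((Finset.Ico (aa n r (blk n r (v:ℕ))) (aa n r (blk n r (v:ℕ) + 1))).erase (v:ℕ))
            ∪ {aa n r (blk n r (v:ℕ)) - 1}) ?_ ?_
        · intro u hadj
          rcases adj_dest hr hk hadj with ⟨_, hne, h1, h2, _⟩ | ⟨_, hBv⟩ | ⟨hu1, _⟩
          · exact Finset.mem_union_left _ (hsb u hne h1 h2)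
          · exact absurd hBv hB
          · exact Finset.mem_union_right _ (Finset.mem_singleton.2 (by omega))
        · refine le_trans (Finset.card_union_le _ _) ?_
          rw [hcard0, Finset.card_singleton]
          omega
  · by_cases hB : isB n r (v:ℕ)
    · have hA' := hA
      unfold isA at hA'
      unfold isB at hB
      by_cases hn' : aa n r (blk n r (v:ℕ) + 1) < n
      · have hi1m : blk n r (v:ℕ) + 1 < mm n r := by
          by_contra hcon
          have : aa n r (mm n r) ≤ aa n r (blk n r (v:ℕ) + 1) := aa_mono hr hk (by omega)
          rw [aa_m hr hk] at this
          omega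
        have hm2 : 2 ≤ mm n r := by omega
        by_cases hd : aa n r (blk n r (v:ℕ) + 1) = aa n r (blk n r (v:ℕ)) + (r + 1)
        · have hdel : del n r (blk n r (v:ℕ)) := ⟨hd, hm2⟩
          refine degree_le_of hr hk v
            ((((Finset.Ico (aa n r (blk n r (v:ℕ))) (aa n r (blk n r (v:ℕ) + 1))).erase
              (v:ℕ)).erase (aa n r (blk n r (v:ℕ)))) ∪ {aa n r (blk n r (v:ℕ) + 1)}) ?_ ?_
          · intro u hadj
            rcases adj_dest hr hk hadj with ⟨hb, hne, h1, h2, hp⟩ | ⟨hu1, _⟩ | ⟨_, hAv⟩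
            · refine Finset.mem_union_left _ (Finset.mem_erase.2 ⟨?_, hsb u hne h1 h2⟩)
              intro hbot
              have hAu : isA n r (u:ℕ) := by
                unfold isA; rw [← hb]; omega
              exact hp ⟨hdel, Or.inr ⟨hB, hAu⟩⟩
            · exact Finset.mem_union_right _ (Finset.mem_singleton.2 (by omega))
            · exact absurd hAv hA
          · refine le_trans (Finset.card_union_le _ _) ?_
            have hmem2 : aa n r (blk n r (v:ℕ)) ∈
                (Finset.Ico (aa n r (blk n r (v:ℕ))) (aa n r (blk n r (v:ℕ) + 1))).erase (v:ℕ) := by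
              refine Finset.mem_erase.2 ⟨by omega, Finset.mem_Ico.2 ⟨le_rfl, by omega⟩⟩
            rw [Finset.card_erase_of_mem hmem2, hcard0, Finset.card_singleton]
            omega
        · refine degree_le_of hr hk v
            (((Finset.Ico (aa n r (blk n r (v:ℕ))) (aa n r (blk n r (v:ℕ) + 1))).erase (v:ℕ))
              ∪ {aa n r (blk n r (v:ℕ) + 1)}) ?_ ?_
          · intro u hadj
            rcases adj_dest hr hk hadj with ⟨_, hne, h1, h2, _⟩ | ⟨hu1, _⟩ | ⟨_, hAv⟩
            · exact Finset.mem_union_left _ (hsb u hne h1 h2)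
            · exact Finset.mem_union_right _ (Finset.mem_singleton.2 (by omega))
            · exact absurd hAv hA
          · refine le_trans (Finset.card_union_le _ _) ?_
            rw [hcard0, Finset.card_singleton]
            omega
      · refine degree_le_of hr hk v _ ?_ (le_trans (le_of_eq hcard0) (by omega))
        intro u hadj
        rcases adj_dest hr hk hadj with ⟨_, hne, h1, h2, _⟩ | ⟨hu1, _⟩ | ⟨_, hAv⟩
        · exact hsb u hne h1 h2
        · exfalso
          have := u.isLt
          omega
        · exact absurd hAv hA
    · refine degree_le_of hr hk v _ ?_ (le_trans (le_of_eq hcard0) (by omega))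
      intro u hadj
      rcases adj_dest hr hk hadj with ⟨_, hne, h1, h2, _⟩ | ⟨_, hBv⟩ | ⟨_, hAv⟩
      · exact hsb u hne h1 h2
      · exact absurd hBv hB
      · exact absurd hAv hA

end Graph
end StorageAux

namespace StorageAux


lemma rank_le_card_span {n : ℕ} (A : Matrix (Fin n) (Fin n) (ZMod 2))
    {ι : Type} [Fintype ι] (g : ι → (Fin n → ZMod 2))
    (h : ∀ w : Fin n, (fun v => A v w) ∈ Submodule.span (ZMod 2) (Set.range g)) :
    A.rank ≤ Fintype.card ι := by
  have hle : LinearMap.range A.mulVecLin ≤ Submodule.span (ZMod 2) (Set.range g) := by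
    rintro _ ⟨x, rfl⟩
    have e : A.mulVecLin x = ∑ w : Fin n, x w • (fun v => A v w) := by
      funext v
      simp only [Matrix.mulVecLin_apply, Matrix.mulVec, dotProduct,
        Finset.sum_apply, Pi.smul_apply, smul_eq_mul]
      exact Finset.sum_congr rfl fun w _ => mul_comm _ _
    rw [e]
    exact Submodule.sum_mem _ fun w _ => Submodule.smul_mem _ _ (h w)
  calc A.rank ≤ Module.finrank (ZMod 2) (Submodule.span (ZMod 2) (Set.range g)) :=
        Submodule.finrank_mono hle
    _ ≤ Fintype.card ι := finrank_range_le_card g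

lemma rank_add_le' {n : ℕ} (A B : Matrix (Fin n) (Fin n) (ZMod 2)) :
    (A + B).rank ≤ A.rank + B.rank := by
  unfold Matrix.rank
  have hle : LinearMap.range (A + B).mulVecLin ≤
      LinearMap.range A.mulVecLin ⊔ LinearMap.range B.mulVecLin := by
    rintro _ ⟨x, rfl⟩
    rw [Matrix.mulVecLin_add]
    exact Submodule.mem_sup.2 ⟨A.mulVecLin x, ⟨x, rfl⟩, B.mulVecLin x, ⟨x, rfl⟩,
      rfl⟩
  calc Module.finrank (ZMod 2) (LinearMap.range (A + B).mulVecLin)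
      ≤ Module.finrank (ZMod 2)
        (LinearMap.range A.mulVecLin ⊔ LinearMap.range B.mulVecLin : Submodule _ _) :=
        Submodule.finrank_mono hle
    _ ≤ _ := Submodule.finrank_add_le_finrank_add_finrank _ _



def MB (n r : ℕ) : Matrix (Fin n) (Fin n) (ZMod 2) :=
  fun u w => if blk n r (u : ℕ) = blk n r (w : ℕ) then 1 else 0

def bvert (n r : ℕ) (hn : 0 < n) (p : Fin (mm n r) × Bool) : Fin n :=
  ⟨(if p.2 then aa n r ((p.1 : ℕ) + 1) - 1 else aa n r (p.1 : ℕ)) % n, Nat.mod_lt _ hn⟩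

section Rank

set_option linter.unusedSectionVars false
variable {n r : ℕ} (hr : 2 ≤ r) (hk : r + 1 ≤ n)
include hr hk

lemma Gr_rank_le : (augAdj (Gr n r)).rank ≤ 3 * mm n r := by
  classical
  have hn0 : 0 < n := by omega
  set G := Gr n r with hG
  set E : Matrix (Fin n) (Fin n) (ZMod 2) := augAdj G - MB n r with hE
  have hsplit : augAdj G = MB n r + E := by
    rw [hE]; abel
  have h1 : (MB n r).rank ≤ mm n r := by
    have key := rank_le_card_span (MB n r) (ι := Fin (mm n r))
      (fun i => fun v => if blk n r (v : ℕ) = (i : ℕ) then 1 else 0) ?_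
    · simpa using key
    · intro w
      apply Submodule.subset_span
      exact ⟨⟨blk n r (w : ℕ), blk_lt hr hk w.isLt⟩, rfl⟩
  have h2 : E.rank ≤ mm n r * 2 := by
    have key := rank_le_card_span E (ι := Fin (mm n r) × Bool)
      (fun p => fun v => E v (bvert n r hn0 p)) ?_
    · simpa using key
    · intro w
      by_cases hA : isA n r (w : ℕ)
      · apply Submodule.subset_span
        refine ⟨(⟨blk n r (w : ℕ), blk_lt hr hk w.isLt⟩, false), ?_⟩
        have hbw : bvert n r hn0 (⟨blk n r (w : ℕ), blk_lt hr hk w.isLt⟩, false) = w := by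
          apply Fin.ext
          show aa n r (blk n r (w : ℕ)) % n = (w : ℕ)
          rw [← hA, Nat.mod_eq_of_lt w.isLt]
        simp only [hbw]
      · by_cases hB : isB n r (w : ℕ)
        · apply Submodule.subset_span
          refine ⟨(⟨blk n r (w : ℕ), blk_lt hr hk w.isLt⟩, true), ?_⟩
          have hbw : bvert n r hn0 (⟨blk n r (w : ℕ), blk_lt hr hk w.isLt⟩, true) = w := by
            apply Fin.ext
            show (aa n r (blk n r (w : ℕ) + 1) - 1) % n = (w : ℕ)
            unfold isB at hB
            rw [← hB]
            simp [Nat.mod_eq_of_lt w.isLt]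
          simp only [hbw]
        · have hzero : (fun v => E v w) = 0 := by
            funext v
            show augAdj G v w - MB n r v w = (0 : ZMod 2)
            have hentry : augAdj G v w = MB n r v w := by
              unfold augAdj MB
              refine if_congr ?_ rfl rfl
              constructor
              · rintro (rfl | hadj)
                · rfl
                · rcases adj_dest hr hk hadj.symm with ⟨hb, _⟩ | ⟨_, hBw⟩ | ⟨_, hAw⟩
                  · exact hb.symm
                  · exact absurd hBw hB
                  · exact absurd hAw hA
              · intro hb
                by_cases hvw : v = w
                · exact Or.inl hvw
                · refine Or.inr (show _ ∧ _ from ⟨hvw, Or.inl ⟨hb, ?_⟩⟩)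
                  rintro ⟨_, ⟨_, hBw⟩ | ⟨_, hAw⟩⟩
                  · exact hB hBw
                  · exact hA hAw
            rw [hentry, sub_self]
          rw [hzero]
          exact Submodule.zero_mem _
  calc (augAdj G).rank = (MB n r + E).rank := by rw [← hsplit]
    _ ≤ (MB n r).rank + E.rank := rank_add_le' _ _
    _ ≤ mm n r + mm n r * 2 := Nat.add_le_add h1 h2
    _ = 3 * mm n r := by ring

end Rank
end StorageAux

open Classical in
/-- For every `n ≥ 2` and `2 ≤ r ≤ n - 1`, there exists a connected graph on `n` vertices
with maximum degree at most `r` whose augmented adjacency matrix has `𝔽₂`-rank at most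
`3 ⌈n / (r + 1)⌉` (the ceiling written `(n + r) / (r + 1)` in natural division);
consequently its binary storage code has rate at least `1 - 3 ⌈n / (r + 1)⌉ / n`. -/
theorem exists_connected_graph_rank_augAdj_le {n r : ℕ} (hn : 2 ≤ n) (hr : 2 ≤ r)
    (hrn : r ≤ n - 1) :
    ∃ G : SimpleGraph (Fin n),
      G.Connected ∧
      (∀ v, G.degree v ≤ r) ∧
      (augAdj G).rank ≤ 3 * ((n + r) / (r + 1)) ∧
      (1 : ℝ) - ((augAdj G).rank : ℝ) / n
        ≥ 1 - 3 * (((n + r) / (r + 1) : ℕ) : ℝ) / n := by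
  have hk : r + 1 ≤ n := by omega
  have hrank : (augAdj (StorageAux.Gr n r)).rank ≤ 3 * ((n + r) / (r + 1)) :=
    StorageAux.Gr_rank_le hr hk
  refine ⟨StorageAux.Gr n r, StorageAux.Gr_connected hr hk hn,
    fun v => StorageAux.Gr_degree_le hr hk v, hrank, ?_⟩
  have hn0 : (0 : ℝ) < (n : ℝ) := by exact_mod_cast (by omega : 0 < n)
  have hc : ((augAdj (StorageAux.Gr n r)).rank : ℝ)
      ≤ 3 * (((n + r) / (r + 1) : ℕ) : ℝ) := by exact_mod_cast hrank
  have hdiv : ((augAdj (StorageAux.Gr n r)).rank : ℝ) / n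
      ≤ 3 * (((n + r) / (r + 1) : ℕ) : ℝ) / n := by gcongr
  linarith
end

section
/- For every n ≥ 2 and every 2 ≤ r ≤ n − 1, the capacity C_{n,r} of binary storage codes with parity repair on graphs with n vertices and locality at most r, i.e., the maximum over all simple graphs G on n vertices with no isolated vertices and maximum degree at most r of the rate 1 − rank_{𝔽₂}(Ā(G))/n, satisfies 1 − (1/n)·⌈n/(r+1)⌉ ≤ C_{n,r} ≤ 1 − (1/n)·⌊n/(r+1)⌋. -/
open Classical in
/-- The set of rates of binary storage codes on simple graphs with `n` vertices,
no isolated vertices, and maximum degree (locality) at most `r`. -/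
noncomputable def storageRates (n r : ℕ) : Set ℝ :=
  {q | ∃ G : SimpleGraph (Fin n),
       (∀ v, 0 < G.degree v) ∧ (∀ v, G.degree v ≤ r) ∧
       q = 1 - ((augAdj G).rank : ℝ) / n}


open Matrix Classical in
lemma key_rank_ge {n r : ℕ} (G : SimpleGraph (Fin n))
    (hdeg : ∀ v, G.degree v ≤ r) : n ≤ (r + 1) * (augAdj G).rank := by
  classical
  set M := augAdj G with hM
  obtain ⟨s, hs_sub, hs_span, hs_li⟩ := exists_linearIndependent (ZMod 2) (Set.range Mᵀ)
  have hfin : s.Finite := hs_li.setFinite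
  set s' : Finset (Fin n → ZMod 2) := hfin.toFinset with hs'
  -- card s' = rank
  haveI : Fintype s := hfin.fintype
  have hcard : s'.card = M.rank := by
    rw [Matrix.rank, Matrix.range_mulVecLin, show Set.range M.col = Set.range Mᵀ from rfl, ← hs_span, finrank_span_set_eq_card hs_li]
    rw [hs', Set.Finite.card_toFinset]; exact (Set.toFinset_card s).symm
  -- supports
  set U : Finset (Fin n) := s'.biUnion (fun x => Finset.univ.filter (fun v => x v ≠ 0)) with hU
  -- the submodule of vectors supported in U
  let W : Submodule (ZMod 2) (Fin n → ZMod 2) :=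
  { carrier := {x | ∀ v, v ∉ U → x v = 0}
    add_mem' := fun ha hb v hv => by simp [ha v hv, hb v hv]
    zero_mem' := fun v hv => rfl
    smul_mem' := fun c x hx v hv => by simp [hx v hv] }
  have hsW : s ⊆ W := by
    intro x hx v hv
    by_contra h
    exact hv (Finset.mem_biUnion.2 ⟨x, hfin.mem_toFinset.2 hx, by simp [h]⟩)
  have hspanW : Submodule.span (ZMod 2) (Set.range Mᵀ) ≤ W := by
    rw [← hs_span]; exact Submodule.span_le.2 hsW
  -- every vertex is in U
  have hUuniv : ∀ j : Fin n, j ∈ U := by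
    intro j
    by_contra h
    have hj : Mᵀ j ∈ W := hspanW (Submodule.subset_span ⟨j, rfl⟩)
    have := hj j h
    have h1 : Mᵀ j j = 1 := by simp [hM, augAdj, Matrix.transpose_apply]
    rw [h1] at this
    exact one_ne_zero this
  have hUcard : U.card = n := by
    have : U = Finset.univ := Finset.eq_univ_iff_forall.2 hUuniv
    simp [this]
  -- each support has card ≤ r + 1
  have hsupp : ∀ x ∈ s', (Finset.univ.filter (fun v => x v ≠ 0)).card ≤ r + 1 := by
    intro x hx
    obtain ⟨i, rfl⟩ : x ∈ Set.range Mᵀ := hs_sub (by simpa [hs'] using hx)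
    have hsub : (Finset.univ.filter (fun v => Mᵀ i v ≠ 0)) ⊆ insert i (G.neighborFinset i) := by
      intro v hv
      simp only [Finset.mem_filter, Matrix.transpose_apply, hM, augAdj] at hv
      rcases hv with ⟨-, hv⟩
      by_cases h : v = i
      · simp [h]
      · have : G.Adj v i := by
          by_contra hadj
          exact hv (by simp [h, hadj])
        simp [Finset.mem_insert, SimpleGraph.mem_neighborFinset, this.symm]
    calc (Finset.univ.filter (fun v => Mᵀ i v ≠ 0)).card ≤ (insert i (G.neighborFinset i)).card :=
          Finset.card_le_card hsub
      _ ≤ (G.neighborFinset i).card + 1 := Finset.card_insert_le _ _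
      _ ≤ r + 1 := by have := hdeg i; rw [← SimpleGraph.card_neighborFinset_eq_degree] at this; omega
  calc n = U.card := hUcard.symm
    _ ≤ ∑ x ∈ s', (Finset.univ.filter (fun v => x v ≠ 0)).card := Finset.card_biUnion_le
    _ ≤ ∑ _x ∈ s', (r + 1) := Finset.sum_le_sum hsupp
    _ = s'.card * (r + 1) := by simp [Finset.sum_const, mul_comm]
    _ = (r + 1) * M.rank := by rw [hcard, mul_comm]

lemma ceil_le_iff {a k : ℕ} (hk : 0 < k) (b : ℕ) : (a + k - 1) / k ≤ b ↔ a ≤ b * k := by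
  rw [← Nat.lt_succ_iff, Nat.div_lt_iff_lt_mul hk, Nat.succ_mul]
  omega

open Matrix Classical in
lemma exists_good_graph {n r : ℕ} (hn : 2 ≤ n) (hr : 2 ≤ r) (hrn : r ≤ n - 1) :
    ∃ G : SimpleGraph (Fin n), (∀ v, 0 < G.degree v) ∧ (∀ v, G.degree v ≤ r) ∧
      (augAdj G).rank ≤ (n + r) / (r + 1) := by
  classical
  have hn0 : 0 < n := by omega
  have hn3 : 3 ≤ n := by omega
  obtain ⟨k, hkdef⟩ : ∃ k, k = (n + r) / (r + 1) := ⟨_, rfl⟩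
  have hk : 0 < k := hkdef ▸ Nat.div_pos (by omega) (by omega)
  have hkn : n ≤ k * (r + 1) := by
    have h1 := Nat.div_add_mod (n + r) (r + 1)
    rw [← hkdef] at h1
    have h2 : (n + r) % (r + 1) < r + 1 := Nat.mod_lt _ (by omega)
    have h3 : (r + 1) * k = k * (r + 1) := mul_comm _ _
    omega
  have h2k : 2 * k ≤ n := by
    obtain ⟨m, hmdef⟩ : ∃ m, m = (n + 2) / 3 := ⟨_, rfl⟩
    have hm3 : n ≤ 3 * m ∧ 2 * m ≤ n := by omega
    have hmr : 3 * m ≤ m * (r + 1) := by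
      calc 3 * m = m * 3 := mul_comm _ _
        _ ≤ m * (r + 1) := Nat.mul_le_mul_left m (by omega)
    have hkm : k ≤ m := by
      have h2 : n + r < (m + 1) * (r + 1) := by
        have e1 : (m + 1) * (r + 1) = m * (r + 1) + (r + 1) := by ring
        omega
      have h3 : (n + r) / (r + 1) < m + 1 := (Nat.div_lt_iff_lt_mul (by omega)).2 h2
      omega
    omega
  -- the ceiling function c i = ⌈i * n / k⌉
  set c : ℕ → ℕ := fun i => (i * n + k - 1) / k with hcdef
  have hcle : ∀ i v : ℕ, c i ≤ v ↔ i * n ≤ v * k := fun i v => ceil_le_iff hk v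
  have hc0 : c 0 = 0 := by
    simp only [hcdef, Nat.zero_mul, Nat.zero_add]
    exact Nat.div_eq_of_lt (by omega)
  have hck : c k = n := by
    simp only [hcdef]
    rw [show k * n + k - 1 = k * n + (k - 1) by omega, Nat.mul_add_div hk,
      Nat.div_eq_of_lt (by omega : k - 1 < k)]
    omega
  have hmono : Monotone c := by
    intro i j hij
    exact Nat.div_le_div_right (by have := Nat.mul_le_mul_right n hij; omega)
  have hstep2 : ∀ i : ℕ, c i + 2 ≤ c (i + 1) := by
    intro i
    have h1 : (i * n + k - 1 + 2 * k) / k = (i * n + k - 1) / k + 2 :=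
      Nat.add_mul_div_right _ _ hk
    simp only [hcdef]
    rw [← h1]
    apply Nat.div_le_div_right
    have e1 : (i + 1) * n = i * n + n := by ring
    omega
  have hstepr : ∀ i : ℕ, c (i + 1) ≤ c i + (r + 1) := by
    intro i
    have h1 : (i * n + k - 1 + (r + 1) * k) / k = (i * n + k - 1) / k + (r + 1) :=
      Nat.add_mul_div_right _ _ hk
    simp only [hcdef]
    rw [← h1]
    apply Nat.div_le_div_right
    have e1 : (i + 1) * n = i * n + n := by ring
    have e2 : (r + 1) * k = k * (r + 1) := mul_comm _ _
    omega
  -- the block assignment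
  have hfb : ∀ v : Fin n, (v : ℕ) * k / n < k := by
    intro v
    rw [Nat.div_lt_iff_lt_mul hn0]
    calc (v : ℕ) * k < n * k := (Nat.mul_lt_mul_right hk).2 v.2
      _ = k * n := mul_comm _ _
  set f : Fin n → Fin k := fun v => ⟨(v : ℕ) * k / n, hfb v⟩ with hfdef
  -- characterization of fibers
  have hchar : ∀ (v : Fin n) (i : Fin k), f v = i ↔ c i ≤ (v : ℕ) ∧ (v : ℕ) < c ((i : ℕ) + 1) := by
    intro v i
    have e1 : c i ≤ (v : ℕ) ↔ (i : ℕ) ≤ (v : ℕ) * k / n := by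
      rw [hcle, Nat.le_div_iff_mul_le hn0]
    have e2 : (v : ℕ) < c ((i : ℕ) + 1) ↔ (v : ℕ) * k / n < (i : ℕ) + 1 := by
      rw [← Nat.not_le, hcle, ← Nat.not_le, Nat.le_div_iff_mul_le hn0]
    rw [e1, e2]
    constructor
    · rintro rfl
      simp only [hfdef]
      omega
    · rintro ⟨h1, h2⟩
      apply Fin.ext
      simp only [hfdef]
      omega
  -- fiber sizes
  set fib : Fin k → Finset (Fin n) := fun i => Finset.univ.filter (fun v => f v = i) with hfibdef
  have hfib_le : ∀ i : Fin k, (fib i).card ≤ r + 1 := by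
    intro i
    have hsub : ∀ v ∈ fib i, (v : ℕ) ∈ Finset.Ico (c i) (c ((i : ℕ) + 1)) := by
      intro v hv
      rw [hfibdef, Finset.mem_filter] at hv
      rw [Finset.mem_Ico]
      exact (hchar v i).1 hv.2
    calc (fib i).card ≤ (Finset.Ico (c i) (c ((i : ℕ) + 1))).card :=
          Finset.card_le_card_of_injOn (fun v => (v : ℕ)) hsub
            (Fin.val_injective.injOn)
      _ = c ((i : ℕ) + 1) - c i := Nat.card_Ico _ _
      _ ≤ r + 1 := by have := hstepr (i : ℕ); omega
  have hfib_ge : ∀ i : Fin k, 2 ≤ (fib i).card := by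
    intro i
    have hlt : c (i : ℕ) + 1 < n := by
      have h1 := hstep2 (i : ℕ)
      have h2 : c ((i : ℕ) + 1) ≤ c k := hmono (by omega)
      omega
    have hmem : ∀ j : ℕ, j = c (i:ℕ) ∨ j = c (i:ℕ) + 1 → ∀ (hj : j < n), (⟨j, hj⟩ : Fin n) ∈ fib i := by
      intro j hj hjn
      rw [hfibdef, Finset.mem_filter]
      refine ⟨Finset.mem_univ _, (hchar _ i).2 ?_⟩
      simp only [Fin.val_mk]
      have h1 := hstep2 (i : ℕ)
      constructor <;> rcases hj with rfl | rfl <;> omega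
    exact Finset.one_lt_card.2
      ⟨_, hmem (c (i:ℕ)) (Or.inl rfl) (by omega), _, hmem (c (i:ℕ) + 1) (Or.inr rfl) hlt,
        Fin.ne_of_val_ne (by omega : c (i:ℕ) ≠ c (i:ℕ) + 1)⟩
  -- the graph
  set G : SimpleGraph (Fin n) :=
    { Adj := fun u v => f u = f v ∧ u ≠ v
      symm := ⟨fun u v h => ⟨h.1.symm, h.2.symm⟩⟩
      loopless := ⟨fun u h => h.2 rfl⟩ } with hGdef
  have hnb : ∀ (v : Fin n) (inst : Fintype (G.neighborSet v)),
      @SimpleGraph.neighborFinset _ G v inst = (fib (f v)).erase v := by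
    intro v inst
    ext u
    rw [SimpleGraph.mem_neighborFinset, Finset.mem_erase, hfibdef, Finset.mem_filter]
    constructor
    · rintro ⟨h1, h2⟩
      exact ⟨fun h => h2 h.symm, Finset.mem_univ _, h1.symm⟩
    · rintro ⟨h1, -, h2⟩
      exact ⟨h2.symm, fun h => h1 h.symm⟩
  have hdeg : ∀ (v : Fin n) (inst : Fintype (G.neighborSet v)),
      @SimpleGraph.degree _ G v inst = (fib (f v)).card - 1 := by
    intro v inst
    rw [← SimpleGraph.card_neighborFinset_eq_degree, hnb v inst]
    rw [Finset.card_erase_of_mem]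
    rw [hfibdef, Finset.mem_filter]
    exact ⟨Finset.mem_univ _, rfl⟩
  refine ⟨G, ?_, ?_, ?_⟩
  · intro v
    rw [hdeg]
    have := hfib_ge (f v)
    omega
  · intro v
    rw [hdeg]
    have := hfib_le (f v)
    omega

  · -- rank bound
    set B : Matrix (Fin n) (Fin k) (ZMod 2) := fun u i => if f u = i then 1 else 0 with hBdef
    have haug : augAdj G = B * Bᵀ := by
      ext u v
      rw [Matrix.mul_apply]
      simp only [Matrix.transpose_apply]; simp only [hBdef, augAdj, ite_mul, one_mul, zero_mul]
      rw [Finset.sum_ite_eq (Finset.univ) (f u) (fun j => if f v = j then (1 : ZMod 2) else 0)]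
      simp only [Finset.mem_univ, if_true]
      by_cases h : f u = f v
      · have hcond : u = v ∨ f u = f v ∧ u ≠ v := by
          by_cases huv : u = v
          · exact Or.inl huv
          · exact Or.inr ⟨h, huv⟩
        rw [if_pos hcond, if_pos h.symm]
      · have hcond : ¬(u = v ∨ f u = f v ∧ u ≠ v) := by
          rintro (rfl | ⟨h1, -⟩)
          · exact h rfl
          · exact h h1
        rw [if_neg hcond, if_neg (fun hh => h hh.symm)]
    rw [haug, ← hkdef]
    calc (B * Bᵀ).rank ≤ B.rank := Matrix.rank_mul_le_left _ _
      _ ≤ Fintype.card (Fin k) := Matrix.rank_le_card_width _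
      _ = k := Fintype.card_fin _


/-- The capacity `C_{n,r}` of binary storage codes with parity repair on graphs with
`n` vertices and locality at most `r` satisfies
`1 - ⌈n/(r+1)⌉/n ≤ C_{n,r} ≤ 1 - ⌊n/(r+1)⌋/n`. -/
theorem capacity_bounds {n r : ℕ} (hn : 2 ≤ n) (hr : 2 ≤ r) (hrn : r ≤ n - 1) :
    (1 : ℝ) - (((n + r) / (r + 1) : ℕ) : ℝ) / n ≤ sSup (storageRates n r) ∧
    sSup (storageRates n r) ≤ 1 - ((n / (r + 1) : ℕ) : ℝ) / n := by
  classical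
  have hn0 : (0 : ℝ) < n := by
    have : 0 < n := by omega
    exact_mod_cast this
  obtain ⟨G₀, h1, h2, h3⟩ := exists_good_graph hn hr hrn
  have hmem : (1 - ((augAdj G₀).rank : ℝ) / n) ∈ storageRates n r := ⟨G₀, h1, h2, rfl⟩
  have hbdd : BddAbove (storageRates n r) := by
    refine ⟨1, fun q hq => ?_⟩
    obtain ⟨G, -, -, rfl⟩ := hq
    have : (0 : ℝ) ≤ ((augAdj G).rank : ℝ) / n := by positivity
    linarith
  constructor
  · refine le_trans ?_ (le_csSup hbdd hmem)
    gcongr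
  · refine csSup_le ⟨_, hmem⟩ ?_
    rintro q ⟨G, -, hG2, rfl⟩
    have hkey : n ≤ (r + 1) * (augAdj G).rank := key_rank_ge G hG2
    have hdiv : n / (r + 1) ≤ (augAdj G).rank := by
      have h4 : n / (r + 1) ≤ ((r + 1) * (augAdj G).rank) / (r + 1) :=
        Nat.div_le_div_right hkey
      rwa [Nat.mul_div_cancel_left _ (by omega : 0 < r + 1)] at h4
    gcongr
end

section
/- Let r : ℕ → ℕ be a sequence with r(n) ≥ 2 for all n. If r(n) → ∞ as n → ∞, then for every n ≥ 2 there exists a simple graph G_n on n vertices with no isolated vertices and maximum degree at most r(n), such that rank_{𝔽₂}(Ā(G_n))/n → 0 as n → ∞; equivalently, the rates of the binary storage codes of the G_n tend to 1. -/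
/-- Union-of-blocks graph: vertices in the same block of size `m` (last block merged
with the remainder) are adjacent. -/
def blkGraph (m n : ℕ) : SimpleGraph (Fin n) where
  Adj u v := u ≠ v ∧ min (u.val / m) (n / m - 1) = min (v.val / m) (n / m - 1)
  symm := ⟨fun u v ⟨h1, h2⟩ => ⟨h1.symm, h2.symm⟩⟩
  loopless := ⟨fun u h => h.1 rfl⟩

section Blk

open Classical Matrix

variable {m n : ℕ}

private lemma hq1 (hm : 2 ≤ m) (hmn : m ≤ n) : 1 ≤ n / m := (Nat.one_le_div_iff (by omega)).2 hmn

/-- characterization of blocks -/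
private lemma mem_blk (hm : 2 ≤ m) (hmn : m ≤ n) (u : Fin n) (j : ℕ) (hj : j ≤ n / m - 1) :
    min (u.val / m) (n / m - 1) = j ↔
      j * m ≤ u.val ∧ u.val < (if j = n / m - 1 then n else (j + 1) * m) := by
  have hm0 : 0 < m := by omega
  have hq := hq1 hm hmn
  by_cases hlast : j = n / m - 1
  · simp only [hlast, if_pos rfl] at *
    constructor
    · intro h
      have : n / m - 1 ≤ u.val / m := by omega
      exact ⟨(Nat.le_div_iff_mul_le hm0).1 this, u.isLt⟩
    · rintro ⟨h1, _⟩
      have : n / m - 1 ≤ u.val / m := (Nat.le_div_iff_mul_le hm0).2 h1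
      omega
  · rw [if_neg hlast]
    constructor
    · intro h
      have hd : u.val / m = j := by omega
      refine ⟨?_, ?_⟩
      · calc j * m = (u.val / m) * m := by rw [hd]
          _ ≤ u.val := Nat.div_mul_le_self _ _
      · exact (Nat.div_lt_iff_lt_mul hm0).1 (by omega)
    · rintro ⟨h1, h2⟩
      have e1 : j ≤ u.val / m := (Nat.le_div_iff_mul_le hm0).2 h1
      have e2 : u.val / m < j + 1 := (Nat.div_lt_iff_lt_mul hm0).2 h2
      omega

private lemma blk_le (u : Fin n) : min (u.val / m) (n / m - 1) ≤ n / m - 1 :=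
  min_le_right _ _

private lemma hi_le (hm : 2 ≤ m) (hmn : m ≤ n) (j : ℕ) (hj : j ≤ n / m - 1) :
    (if j = n / m - 1 then n else (j + 1) * m) ≤ n := by
  have hm0 : 0 < m := by omega
  split
  · exact le_refl n
  · have h1 : j + 1 ≤ n / m := by omega
    calc (j + 1) * m ≤ (n / m) * m := Nat.mul_le_mul_right m h1
      _ ≤ n := Nat.div_mul_le_self _ _

private lemma lo_add_two_le (hm : 2 ≤ m) (hmn : m ≤ n) (j : ℕ) (hj : j ≤ n / m - 1) :
    j * m + 2 ≤ (if j = n / m - 1 then n else (j + 1) * m) := by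
  have hm0 : 0 < m := by omega
  have hq := hq1 hm hmn
  split
  · have h1 : (n / m) * m ≤ n := Nat.div_mul_le_self _ _
    have h2 : j * m + m ≤ (n / m) * m := by
      calc j * m + m = (j + 1) * m := by ring
        _ ≤ (n / m) * m := Nat.mul_le_mul_right m (by omega)
    omega
  · have : j * m + m = (j + 1) * m := by ring
    omega

private lemma width_le (hm : 2 ≤ m) (hmn : m ≤ n) (j : ℕ) (hj : j ≤ n / m - 1) :
    (if j = n / m - 1 then n else (j + 1) * m) ≤ j * m + (2 * m - 1) := by
  have hm0 : 0 < m := by omega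
  have hq := hq1 hm hmn
  split
  · rename_i h
    have h1 : n < (n / m + 1) * m := (Nat.div_lt_iff_lt_mul hm0).1 (by omega)
    have h2 : (n / m + 1) * m = (n / m - 1) * m + 2 * m := by
      have : n / m + 1 = (n / m - 1) + 2 := by omega
      rw [this]; ring
    subst h; omega
  · have : (j + 1) * m = j * m + m := by ring
    omega

/-- degree bounds for the block graph -/
lemma blkGraph_degree (hm : 2 ≤ m) (hmn : m ≤ n) (v : Fin n) :
    0 < (blkGraph m n).degree v ∧ (blkGraph m n).degree v ≤ 2 * m - 2 := by
  classical
  have hm0 : 0 < m := by omega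
  have hq := hq1 hm hmn
  set j := min (v.val / m) (n / m - 1) with hjdef
  have hj : j ≤ n / m - 1 := blk_le v
  set b := (if j = n / m - 1 then n else (j + 1) * m) with hbdef
  have hvmem : j * m ≤ v.val ∧ v.val < b := (mem_blk hm hmn v j hj).1 rfl
  have hb_le : b ≤ n := hi_le hm hmn j hj
  have hlen : j * m + 2 ≤ b := lo_add_two_le hm hmn j hj
  constructor
  · -- positivity: find a neighbor
    rw [SimpleGraph.degree, Finset.card_pos]
    set a : ℕ := if v.val = j * m then j * m + 1 else j * m with hadef
    have ha_lt : a < n := by split_ifs at hadef <;> omega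
    have ha_mem : j * m ≤ a ∧ a < b := by split_ifs at hadef <;> omega
    have hane : a ≠ v.val := by split_ifs at hadef <;> omega
    refine ⟨⟨a, ha_lt⟩, ?_⟩
    rw [SimpleGraph.mem_neighborFinset]
    have hblk : min (a / m) (n / m - 1) = j := (mem_blk hm hmn ⟨a, ha_lt⟩ j hj).2 ha_mem
    exact ⟨fun h => hane (congrArg Fin.val h).symm, hblk.symm⟩
  · -- upper bound
    rw [SimpleGraph.degree]
    have hle : ((blkGraph m n).neighborFinset v).card ≤
        ((Finset.Ico (j * m) b).erase v.val).card := by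
      apply Finset.card_le_card_of_injOn (fun u => u.val)
      · intro u hu
        rw [Finset.mem_coe, SimpleGraph.mem_neighborFinset] at hu
        obtain ⟨hne, heq⟩ := hu
        have hmem := (mem_blk hm hmn u j hj).1 heq.symm
        exact Finset.mem_erase.2 ⟨fun h => hne (Fin.ext h.symm), Finset.mem_Ico.2 hmem⟩
      · intro a _ c _ h
        exact Fin.ext h
    have hcard : ((Finset.Ico (j * m) b).erase v.val).card = b - j * m - 1 := by
      rw [Finset.card_erase_of_mem (Finset.mem_Ico.2 hvmem), Nat.card_Ico]
    have hw := width_le hm hmn j hj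
    omega

/-- rank bound for the augmented adjacency matrix of the block graph -/
lemma blkGraph_rank (hm : 2 ≤ m) (hmn : m ≤ n) : (augAdj (blkGraph m n)).rank * m ≤ n := by
  classical
  have hm0 : 0 < m := by omega
  have hq : 1 ≤ n / m := hq1 hm hmn
  set B : Matrix (Fin n) (Fin (n / m)) (ZMod 2) :=
    fun u i => if min (u.val / m) (n / m - 1) = i.val then 1 else 0 with hB
  have hfac : augAdj (blkGraph m n) = B * Bᵀ := by
    ext u v
    rw [Matrix.mul_apply]
    have hju : min (u.val / m) (n / m - 1) < n / m := by
      have := blk_le (m := m) (n := n) u; omega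
    have key : ∀ i : Fin (n / m),
        B u i * Bᵀ i v =
          if (⟨min (u.val / m) (n / m - 1), hju⟩ : Fin (n / m)) = i then
            (if min (v.val / m) (n / m - 1) = i.val then 1 else 0) else 0 := by
      intro i
      by_cases h : min (u.val / m) (n / m - 1) = i.val
      · have h' : (⟨min (u.val / m) (n / m - 1), hju⟩ : Fin (n / m)) = i := Fin.ext h
        rw [Matrix.transpose_apply]; simp [hB, h, h']
      · have h' : (⟨min (u.val / m) (n / m - 1), hju⟩ : Fin (n / m)) ≠ i :=
          fun hh => h (congrArg Fin.val hh)
        simp [hB, Matrix.transpose_apply, h, h']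
    rw [Finset.sum_congr rfl (fun i _ => key i), Finset.sum_ite_eq]
    simp only [Finset.mem_univ, if_pos]
    unfold augAdj
    by_cases huv : u = v
    · subst huv; simp
    · by_cases hbb : min (v.val / m) (n / m - 1) = min (u.val / m) (n / m - 1)
      · rw [if_pos hbb, if_pos (Or.inr ⟨huv, hbb.symm⟩)]
      · rw [if_neg hbb, if_neg]
        rintro (h | ⟨_, h⟩)
        · exact huv h
        · exact hbb h.symm
  have h1 : (augAdj (blkGraph m n)).rank ≤ n / m := by
    rw [hfac]
    calc (B * Bᵀ).rank ≤ B.rank := Matrix.rank_mul_le_left B Bᵀ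
      _ ≤ Fintype.card (Fin (n / m)) := Matrix.rank_le_card_width B
      _ = n / m := Fintype.card_fin _
  calc (augAdj (blkGraph m n)).rank * m ≤ (n / m) * m := Nat.mul_le_mul_right m h1
    _ ≤ n := Nat.div_mul_le_self _ _

end Blk

open Classical in
/-- If `r n ≥ 2` for all `n` and `r n → ∞`, then there is a sequence of graphs `G n` on
`n` vertices (for every `n ≥ 2` having no isolated vertices and maximum degree at most
`r n`) such that `rank(Ā(G n)) / n → 0`; equivalently, the rates
`1 - rank(Ā(G n)) / n` of the binary storage codes tend to `1`. -/
theorem exists_graph_seq_rate_tendsto_one (r : ℕ → ℕ) (hr : ∀ n, 2 ≤ r n)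
    (hr' : Filter.Tendsto r Filter.atTop Filter.atTop) :
    ∃ G : (n : ℕ) → SimpleGraph (Fin n),
      (∀ n, 2 ≤ n → (∀ v, 0 < (G n).degree v) ∧ (∀ v, (G n).degree v ≤ r n)) ∧
      Filter.Tendsto (fun n => ((augAdj (G n)).rank : ℝ) / n)
        Filter.atTop (nhds 0) ∧
      Filter.Tendsto (fun n => (1 : ℝ) - ((augAdj (G n)).rank : ℝ) / n)
        Filter.atTop (nhds 1) := by
  set M : ℕ → ℕ := fun n => min (r n / 2 + 1) n with hM
  have hRank : Filter.Tendsto (fun n => ((augAdj (blkGraph (M n) n)).rank : ℝ) / n)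
      Filter.atTop (nhds 0) := by
    have hMtop : Filter.Tendsto M Filter.atTop Filter.atTop := by
      rw [Filter.tendsto_atTop]
      intro K
      have h1 : ∀ᶠ n in Filter.atTop, 2 * K ≤ r n := hr'.eventually_ge_atTop (2 * K)
      have h2 : ∀ᶠ n in Filter.atTop, K ≤ n := Filter.eventually_ge_atTop K
      filter_upwards [h1, h2] with n ha hb
      simp only [hM, le_min_iff]
      omega
    have hinv : Filter.Tendsto (fun n => 1 / (M n : ℝ)) Filter.atTop (nhds 0) :=
      tendsto_one_div_atTop_nhds_zero_nat.comp hMtop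
    apply squeeze_zero' (Filter.Eventually.of_forall fun n => by positivity) ?_ hinv
    filter_upwards [Filter.eventually_ge_atTop 2] with n hn
    have hm : 2 ≤ M n := by
      have := hr n; simp only [hM]; omega
    have hmn : M n ≤ n := min_le_right _ _
    have hrank : (augAdj (blkGraph (M n) n)).rank * M n ≤ n := blkGraph_rank hm hmn
    have hn0 : (0 : ℝ) < n := by positivity
    have hM0 : (0 : ℝ) < M n := by
      have : (0 : ℕ) < M n := by omega
      exact_mod_cast this
    rw [div_le_div_iff₀ hn0 hM0]
    calc ((augAdj (blkGraph (M n) n)).rank : ℝ) * M n ≤ (n : ℝ) := by exact_mod_cast hrank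
      _ = 1 * n := (one_mul _).symm
  refine ⟨fun n => blkGraph (M n) n, ?_, hRank, by simpa using (tendsto_const_nhds.sub hRank)⟩
  intro n hn
  have hm : 2 ≤ M n := by
    have := hr n; simp only [hM]; omega
  have hmn : M n ≤ n := min_le_right _ _
  constructor
  · intro v; exact (blkGraph_degree hm hmn v).1
  · intro v
    have hMb : 2 * M n - 2 ≤ r n := by
      have h1 : M n ≤ r n / 2 + 1 := min_le_left _ _
      have h2 : r n / 2 * 2 ≤ r n := Nat.div_mul_le_self _ _
      omega
    exact le_trans (blkGraph_degree hm hmn v).2 hMb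
end

section
/- Let r ≥ 2 be a fixed natural number. For every n ≥ 2 and every simple graph G on n vertices with maximum degree at most r, the rate of its binary storage code satisfies 1 − rank_{𝔽₂}(Ā(G))/n ≤ 1 − (1/n)·⌊n/(r+1)⌋ ≤ 1 − 1/(r+1) + 1/n. In particular, for any sequence of graphs G_n on n vertices with maximum degree at most r, the rates of the binary storage codes of the G_n do not converge to 1: their limsup is at most 1 − 1/(r+1) < 1. -/
open Classical Matrix Submodule in
lemma key_rank {n r : ℕ} (G : SimpleGraph (Fin n)) (hdeg : ∀ v, G.degree v ≤ r) :
    n ≤ (augAdj G).rank * (r + 1) := by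
  classical
  set M := augAdj G with hM
  obtain ⟨b, hbs, hspan, hli⟩ := exists_linearIndependent (ZMod 2) (Set.range Mᵀ)
  have hbfin : b.Finite := (Set.finite_range Mᵀ).subset hbs
  haveI := hbfin.fintype
  have hcard : b.toFinset.card = M.rank := by
    rw [Matrix.rank, Matrix.range_mulVecLin, show Set.range M.col = Set.range Mᵀ from rfl, ← hspan, finrank_span_set_eq_card hli]
  set U : Finset (Fin n) :=
    hbfin.toFinset.biUnion (fun w => Finset.univ.filter (fun u => w u ≠ 0)) with hU
  have hmem : ∀ x ∈ span (ZMod 2) b, ∀ u : Fin n, u ∉ U → x u = 0 := by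
    intro x hx
    induction hx using Submodule.span_induction with
    | mem x hxb =>
      intro u hu
      by_contra hne
      exact hu (Finset.mem_biUnion.2 ⟨x, hbfin.mem_toFinset.2 hxb,
        Finset.mem_filter.2 ⟨Finset.mem_univ _, hne⟩⟩)
    | zero => intro u _; rfl
    | add x y _ _ hx hy => intro u hu; simp [hx u hu, hy u hu]
    | smul c x _ hx => intro u hu; simp [hx u hu]
  have hall : ∀ u : Fin n, u ∈ U := by
    intro u
    by_contra hu
    have hcol : Mᵀ u ∈ span (ZMod 2) b := by
      rw [hspan]; exact subset_span ⟨u, rfl⟩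
    have := hmem _ hcol u hu
    simp [hM, augAdj, Matrix.transpose_apply] at this
  have hUcard : (Finset.univ : Finset (Fin n)).card ≤ U.card :=
    Finset.card_le_card (fun u _ => hall u)
  have hsupp : ∀ w ∈ hbfin.toFinset,
      (Finset.univ.filter (fun u => w u ≠ 0)).card ≤ r + 1 := by
    intro w hw
    obtain ⟨j, rfl⟩ := hbs (hbfin.mem_toFinset.1 hw)
    have : (Finset.univ.filter (fun u => Mᵀ j u ≠ 0)) ⊆ insert j (G.neighborFinset j) := by
      intro u hu
      rcases Finset.mem_filter.1 hu with ⟨-, hne⟩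
      have : u = j ∨ G.Adj u j := by
        by_contra hc
        exact hne (by simp [hM, augAdj, Matrix.transpose_apply, hc])
      rcases this with h | h
      · simp [h]
      · exact Finset.mem_insert_of_mem (by simp [G.mem_neighborFinset, h.symm])
    calc (Finset.univ.filter (fun u => Mᵀ j u ≠ 0)).card
        ≤ (insert j (G.neighborFinset j)).card := Finset.card_le_card this
      _ ≤ (G.neighborFinset j).card + 1 := Finset.card_insert_le _ _
      _ ≤ r + 1 := by have := hdeg j; rw [G.card_neighborFinset_eq_degree]; omega
  calc n = (Finset.univ : Finset (Fin n)).card := by simp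
    _ ≤ U.card := hUcard
    _ ≤ ∑ w ∈ hbfin.toFinset, (Finset.univ.filter (fun u => w u ≠ 0)).card :=
        Finset.card_biUnion_le
    _ ≤ ∑ _w ∈ hbfin.toFinset, (r + 1) := Finset.sum_le_sum hsupp
    _ = hbfin.toFinset.card * (r + 1) := by rw [Finset.sum_const, smul_eq_mul]
    _ = M.rank * (r + 1) := by rw [← hcard, Set.Finite.toFinset_eq_toFinset]

open Classical in
/-- For a fixed locality `r ≥ 2`: every graph on `n ≥ 2` vertices with maximum degree at
most `r` has storage-code rate at most `1 - ⌊n/(r+1)⌋/n ≤ 1 - 1/(r+1) + 1/n`; and for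
any sequence of such graphs the limsup of the rates is at most `1 - 1/(r+1) < 1`. -/
theorem rate_bounded_away_from_one_of_constant_locality {r : ℕ} (hr : 2 ≤ r) :
    (∀ n : ℕ, 2 ≤ n → ∀ G : SimpleGraph (Fin n), (∀ v, G.degree v ≤ r) →
      (1 : ℝ) - ((augAdj G).rank : ℝ) / n ≤ 1 - ((n / (r + 1) : ℕ) : ℝ) / n ∧
      (1 : ℝ) - ((n / (r + 1) : ℕ) : ℝ) / n ≤ 1 - 1 / ((r : ℝ) + 1) + 1 / n) ∧
    (∀ G : (n : ℕ) → SimpleGraph (Fin n), (∀ n, ∀ v, (G n).degree v ≤ r) →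
      Filter.limsup (fun n => (1 : ℝ) - ((augAdj (G n)).rank : ℝ) / n) Filter.atTop
        ≤ 1 - 1 / ((r : ℝ) + 1)) ∧
    (1 : ℝ) - 1 / ((r : ℝ) + 1) < 1 := by
  have hr1 : (0:ℝ) < (r:ℝ) + 1 := by positivity
  have main : ∀ n : ℕ, 2 ≤ n → ∀ G : SimpleGraph (Fin n), (∀ v, G.degree v ≤ r) →
      (1 : ℝ) - ((augAdj G).rank : ℝ) / n ≤ 1 - ((n / (r + 1) : ℕ) : ℝ) / n ∧
      (1 : ℝ) - ((n / (r + 1) : ℕ) : ℝ) / n ≤ 1 - 1 / ((r : ℝ) + 1) + 1 / n := by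
    intro n hn G hdeg
    have hnR : (0:ℝ) < n := by positivity
    have hkey := key_rank G hdeg
    have hfloor : n / (r + 1) ≤ (augAdj G).rank := by
      calc n / (r + 1) ≤ ((augAdj G).rank * (r + 1)) / (r + 1) :=
            Nat.div_le_div_right hkey
        _ = (augAdj G).rank := Nat.mul_div_cancel _ (by omega)
    constructor
    · have : ((n / (r + 1) : ℕ) : ℝ) ≤ ((augAdj G).rank : ℝ) := by exact_mod_cast hfloor
      gcongr
    · have hlt : (n : ℝ) < (((n / (r + 1) : ℕ) : ℝ) + 1) * ((r:ℝ) + 1) := by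
        have h1 := Nat.div_add_mod n (r + 1)
        have h2 := Nat.mod_lt n (show 0 < r + 1 by omega)
        have : n < (n / (r + 1) + 1) * (r + 1) := by nlinarith [Nat.zero_le (n / (r+1))]
        exact_mod_cast this
      rw [← sub_nonneg]
      have heq : (1 - 1 / ((r:ℝ) + 1) + 1 / ↑n) - (1 - ((n / (r + 1) : ℕ) : ℝ) / ↑n) =
          ((((n / (r + 1) : ℕ) : ℝ) + 1) * ((r:ℝ) + 1) - n) / (↑n * ((r:ℝ) + 1)) := by
        field_simp
        ring
      rw [heq]
      apply div_nonneg (by linarith) (by positivity)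
  refine ⟨main, ?_, ?_⟩
  · intro G hdeg
    set L : ℝ := 1 - 1 / ((r : ℝ) + 1) with hL
    have hfg : ∀ᶠ n in Filter.atTop,
        (1 : ℝ) - ((augAdj (G n)).rank : ℝ) / n ≤ L + 1 / n := by
      filter_upwards [Filter.eventually_ge_atTop 2] with n hn
      have := main n hn (G n) (hdeg n)
      have h2 := this.1.trans this.2
      linarith [h2]
    have hg : Filter.Tendsto (fun n : ℕ => L + 1 / (n:ℝ)) Filter.atTop (nhds L) := by
      have := (tendsto_one_div_atTop_nhds_zero_nat : Filter.Tendsto (fun n : ℕ => 1 / (n:ℝ)) Filter.atTop (nhds 0))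
      simpa using (tendsto_const_nhds (x := L) (f := Filter.atTop)).add this
    have hcb : Filter.IsCoboundedUnder (· ≤ ·) Filter.atTop
        (fun n => (1 : ℝ) - ((augAdj (G n)).rank : ℝ) / n) := by
      apply Filter.isCoboundedUnder_le_of_eventually_le Filter.atTop (x := 0)
      apply Filter.Eventually.of_forall
      intro n
      have hrank : ((augAdj (G n)).rank : ℝ) ≤ n := by
        exact_mod_cast ((augAdj (G n)).rank_le_card_width).trans (by simp)
      rcases Nat.eq_zero_or_pos n with h | h
      · subst h; norm_num
      · have hnR : (0:ℝ) < n := by positivity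
        have : ((augAdj (G n)).rank : ℝ) / n ≤ 1 := by
          rw [div_le_one hnR]; exact hrank
        linarith
    calc Filter.limsup (fun n => (1 : ℝ) - ((augAdj (G n)).rank : ℝ) / n) Filter.atTop
        ≤ Filter.limsup (fun n : ℕ => L + 1 / (n:ℝ)) Filter.atTop :=
          Filter.limsup_le_limsup hfg hcb hg.isBoundedUnder_le
      _ = L := hg.limsup_eq
  · have : 0 < 1 / ((r:ℝ) + 1) := by positivity
    linarith
end

section
/- Let r : ℕ → ℕ be a sequence with 2 ≤ r(n) for all n. The following are equivalent: (i) r(n) → ∞ as n → ∞; (ii) there exists a sequence of simple graphs G_n, where G_n has n vertices, no isolated vertices, and maximum degree at most r(n), such that the rate 1 − rank_{𝔽₂}(Ā(G_n))/n of the binary storage code of G_n tends to 1 as n → ∞. -/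
/-- block assignment -/
def blockFun (n m : ℕ) (u : Fin n) : Fin ((n - 2) / m + 1) :=
  ⟨min ((u : ℕ) / m) ((n - 2) / m), Nat.lt_succ_of_le (min_le_right _ _)⟩

/-- union of cliques -/
def cliqueGraph (n m : ℕ) : SimpleGraph (Fin n) :=
  SimpleGraph.fromRel (fun u v => blockFun n m u = blockFun n m v)

lemma cliqueGraph_adj {n m : ℕ} {u v : Fin n} :
    (cliqueGraph n m).Adj u v ↔ u ≠ v ∧ blockFun n m u = blockFun n m v := by
  rw [cliqueGraph, SimpleGraph.fromRel_adj]
  constructor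
  · rintro ⟨h1, h2 | h2⟩
    · exact ⟨h1, h2⟩
    · exact ⟨h1, h2.symm⟩
  · rintro ⟨h1, h2⟩; exact ⟨h1, Or.inl h2⟩

open Classical in
lemma augAdj_cliqueGraph (n m : ℕ) :
    augAdj (cliqueGraph n m) =
      fun u v => if blockFun n m u = blockFun n m v then 1 else 0 := by
  funext u v
  by_cases h : u = v
  · subst h; simp [augAdj]
  · simp [augAdj, cliqueGraph_adj, h]

open Classical in
lemma rank_cliqueGraph_le (n m : ℕ) :
    (augAdj (cliqueGraph n m)).rank ≤ (n - 2) / m + 1 := by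
  set f := blockFun n m
  set A : Matrix (Fin n) (Fin ((n-2)/m + 1)) (ZMod 2) :=
    fun u k => if f u = k then 1 else 0 with hA
  set B : Matrix (Fin ((n-2)/m + 1)) (Fin n) (ZMod 2) :=
    fun k v => if f v = k then 1 else 0 with hB
  have hM : augAdj (cliqueGraph n m) = A * B := by
    rw [augAdj_cliqueGraph]
    funext u v
    rw [Matrix.mul_apply]
    simp only [hA, hB]
    rw [Finset.sum_eq_single (f u)]
    · simp [eq_comm]
      rfl
    · intro k _ hk
      simp [Ne.symm hk]
    · simp
  calc (augAdj (cliqueGraph n m)).rank = (A * B).rank := by rw [hM]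
    _ ≤ A.rank := Matrix.rank_mul_le_left A B
    _ ≤ Fintype.card (Fin ((n-2)/m + 1)) := Matrix.rank_le_card_width A
    _ = (n-2)/m + 1 := by simp

open Classical

lemma blockFun_val {n m : ℕ} (u : Fin n) :
    (blockFun n m u).val = min ((u : ℕ) / m) ((n - 2) / m) := rfl

lemma degree_pos (n m : ℕ) (hm : 2 ≤ m) (hn : 2 ≤ n) (v : Fin n) :
    0 < (cliqueGraph n m).degree v := by
  have hm0 : 0 < m := by omega
  set L := (n - 2) / m with hL
  set k := min ((v : ℕ) / m) L with hk
  have hkL : k ≤ L := min_le_right _ _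
  have hLm : L * m ≤ n - 2 := Nat.div_mul_le_self _ _
  have hale : k * m ≤ L * m := Nat.mul_le_mul_right m hkL
  have ha1 : k * m + 1 < n := by omega
  have hdiv : ∀ j : ℕ, j < m → (k * m + j) / m = k := by
    intro j hj
    rw [mul_comm, Nat.mul_add_div hm0, Nat.div_eq_of_lt hj]
    omega
  set u0val : ℕ := if (v : ℕ) = k * m then k * m + 1 else k * m with hu0
  have hu0lt : u0val < n := by rw [hu0]; split <;> omega
  set u0 : Fin n := ⟨u0val, hu0lt⟩ with hu0'
  have hdu : u0val / m = k := by
    rw [hu0]; split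
    · exact hdiv 1 (by omega)
    · simpa using hdiv 0 hm0
  have hne : u0 ≠ v := by
    intro h
    have : (u0 : ℕ) = (v : ℕ) := by rw [h]
    simp only [hu0'] at this
    rw [hu0] at this
    split at this <;> omega
  have hadj : (cliqueGraph n m).Adj v u0 := by
    rw [cliqueGraph_adj]
    refine ⟨hne.symm, Fin.ext ?_⟩
    rw [blockFun_val, blockFun_val]
    show min ((v : ℕ) / m) L = min ((u0 : ℕ) / m) L
    simp only [hu0']
    rw [hdu]
    omega
  rw [SimpleGraph.degree_pos_iff_exists_adj]
  exact ⟨u0, hadj⟩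

lemma degree_le (n m : ℕ) (hm : 2 ≤ m) (hn : 2 ≤ n) (v : Fin n) :
    (cliqueGraph n m).degree v ≤ m := by
  have hm0 : 0 < m := by omega
  set L := (n - 2) / m with hL
  set k := min ((v : ℕ) / m) L with hk
  have hkL : k ≤ L := min_le_right _ _
  set S : Finset (Fin n) :=
    Finset.univ.filter (fun u => blockFun n m u = blockFun n m v) with hS
  have hvS : v ∈ S := by simp [hS]
  have hbound : ∀ u ∈ S, k * m ≤ (u : ℕ) ∧ (u : ℕ) ≤ k * m + m := by
    intro u hu
    have h1 : min ((u : ℕ) / m) L = k := by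
      have h2 : blockFun n m u = blockFun n m v := by
        simpa [hS] using hu
      have h3 := congrArg Fin.val h2
      rw [blockFun_val, blockFun_val] at h3
      exact h3
    have hku : k ≤ (u : ℕ) / m := by omega
    have hlow : k * m ≤ (u : ℕ) :=
      le_trans (Nat.mul_le_mul_right m hku) (Nat.div_mul_le_self _ _)
    refine ⟨hlow, ?_⟩
    rcases lt_or_eq_of_le hkL with hlt | heq
    · have hdu : (u : ℕ) / m < k + 1 := by omega
      have h4 : (u : ℕ) < (k + 1) * m := by
        rw [← Nat.div_lt_iff_lt_mul hm0]; omega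
      rw [add_mul, one_mul] at h4
      omega
    · have h3 := Nat.div_add_mod (n - 2) m
      rw [mul_comm] at h3
      have h4 := Nat.mod_lt (n - 2) hm0
      have h2 : n - 2 < L * m + m := by rw [hL]; omega
      have hun : (u : ℕ) < n := u.isLt
      have : (u : ℕ) ≤ L * m + m := by omega
      rw [heq]
      omega
  have hcard : S.card ≤ m + 1 := by
    rw [← Finset.card_range (m + 1)]
    refine Finset.card_le_card_of_injOn (fun u => (u : ℕ) - k * m) ?_ ?_
    · intro u hu
      have := hbound u hu
      simp only [Finset.coe_range, Set.mem_Iio, Finset.mem_coe, Finset.mem_range]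
      omega
    · intro u hu w hw h
      have h1 := hbound u hu
      have h2 := hbound w hw
      apply Fin.ext
      simp only at h
      omega
  have hsub : (cliqueGraph n m).neighborFinset v ⊆ S.erase v := by
    intro u hu
    rw [SimpleGraph.mem_neighborFinset, cliqueGraph_adj] at hu
    rw [Finset.mem_erase]
    exact ⟨Ne.symm hu.1, by simp [hS, hu.2.symm]⟩
  calc (cliqueGraph n m).degree v = ((cliqueGraph n m).neighborFinset v).card := rfl
    _ ≤ (S.erase v).card := Finset.card_le_card hsub
    _ = S.card - 1 := Finset.card_erase_of_mem hvS
    _ ≤ m := by omega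

lemma support_of_mem_span {n : ℕ} (t : Set (Fin n → ZMod 2)) (x : Fin n → ZMod 2)
    (hx : x ∈ Submodule.span (ZMod 2) t) (u : Fin n) (hu : x u ≠ 0) :
    ∃ w ∈ t, w u ≠ 0 := by
  refine Submodule.span_induction (p := fun x _ => x u ≠ 0 → ∃ w ∈ t, w u ≠ 0)
    ?_ ?_ ?_ ?_ hx hu
  · intro w hw hwu; exact ⟨w, hw, hwu⟩
  · intro h; simp at h
  · intro x y _ _ hx' hy' hxy
    by_cases h : x u = 0
    · exact hy' (by intro h'; apply hxy; simp [Pi.add_apply, h, h'])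
    · exact hx' h
  · intro a x _ hx' hax
    refine hx' (fun h => hax ?_)
    simp [Pi.smul_apply, h]

lemma card_le_rank_mul {n c : ℕ} (M : Matrix (Fin n) (Fin n) (ZMod 2))
    (hd : ∀ u, M u u ≠ 0)
    (hc : ∀ u, (Finset.univ.filter (fun v => M v u ≠ 0)).card ≤ c) :
    n ≤ M.rank * c := by
  obtain ⟨b, hbs, hspan, hli⟩ := exists_linearIndependent (ZMod 2) (Set.range M.transpose)
  have hfin : b.Finite := (Set.finite_range M.transpose).subset hbs
  have : Fintype b := hfin.fintype
  have hrank : M.rank = b.toFinset.card := by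
    rw [Matrix.rank, Matrix.range_mulVecLin, show M.col = M.transpose from rfl, ← hspan, finrank_span_set_eq_card hli]
  have hcover : (Finset.univ : Finset (Fin n)) ⊆
      b.toFinset.biUnion (fun w => Finset.univ.filter (fun u => w u ≠ 0)) := by
    intro u _
    have hcol : M.transpose u ∈ Submodule.span (ZMod 2) b := by
      rw [hspan]
      exact Submodule.subset_span (Set.mem_range_self u)
    obtain ⟨w, hw, hwu⟩ := support_of_mem_span b (M.transpose u) hcol u (hd u)
    rw [Finset.mem_biUnion]
    exact ⟨w, Set.mem_toFinset.mpr hw, by simp [hwu]⟩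
  have h1 : n ≤ ∑ w ∈ b.toFinset, (Finset.univ.filter (fun u => w u ≠ 0)).card := by
    calc n = (Finset.univ : Finset (Fin n)).card := by simp
      _ ≤ _ := Finset.card_le_card hcover
      _ ≤ _ := Finset.card_biUnion_le
  have h2 : ∀ w ∈ b.toFinset, (Finset.univ.filter (fun u => w u ≠ 0)).card ≤ c := by
    intro w hw
    obtain ⟨v, rfl⟩ := hbs (Set.mem_toFinset.mp hw)
    exact hc v
  calc n ≤ _ := h1
    _ ≤ b.toFinset.card * c := by
        calc _ ≤ b.toFinset.card • c := Finset.sum_le_card_nsmul _ _ c h2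
          _ = b.toFinset.card * c := by rw [smul_eq_mul]
    _ = M.rank * c := by rw [hrank]

lemma rank_lower (n : ℕ) (G : SimpleGraph (Fin n)) (R : ℕ)
    (hdeg : ∀ v, G.degree v ≤ R) :
    n ≤ (augAdj G).rank * (R + 1) := by
  apply card_le_rank_mul
  · intro u
    simp [augAdj]
  · intro u
    have hsub : Finset.univ.filter (fun v => augAdj G v u ≠ 0) ⊆
        insert u (G.neighborFinset u) := by
      intro v hv
      rw [Finset.mem_filter] at hv
      have : v = u ∨ G.Adj v u := by
        by_contra h
        exact hv.2 (by simp [augAdj, h])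
      rcases this with h | h
      · simp [h]
      · simp [Finset.mem_insert, SimpleGraph.mem_neighborFinset, h.symm]
    calc (Finset.univ.filter (fun v => augAdj G v u ≠ 0)).card
        ≤ (insert u (G.neighborFinset u)).card := Finset.card_le_card hsub
      _ ≤ (G.neighborFinset u).card + 1 := Finset.card_insert_le _ _
      _ = G.degree u + 1 := rfl
      _ ≤ R + 1 := by have := hdeg u; omega

open Classical in
/-- Given a sequence of localities `r n ≥ 2`, there exists a sequence of graphs `G n` on
`n` vertices (for `n ≥ 2`, without isolated vertices and with maximum degree at most
`r n`) whose binary storage codes have rates tending to `1` if and only if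
`r n → ∞`. -/
theorem rate_tendsto_one_iff_locality_tendsto_atTop (r : ℕ → ℕ) (hr : ∀ n, 2 ≤ r n) :
    Filter.Tendsto r Filter.atTop Filter.atTop ↔
    ∃ G : (n : ℕ) → SimpleGraph (Fin n),
      (∀ n, 2 ≤ n → (∀ v, 0 < (G n).degree v) ∧ (∀ v, (G n).degree v ≤ r n)) ∧
      Filter.Tendsto (fun n => (1 : ℝ) - ((augAdj (G n)).rank : ℝ) / n)
        Filter.atTop (nhds 1) := by
  constructor
  · intro htop
    set m : ℕ → ℕ := fun n => max 2 (min n (r n)) with hmdef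
    refine ⟨fun n => cliqueGraph n (m n), ?_, ?_⟩
    · intro n hn
      have hm2 : 2 ≤ m n := le_max_left _ _
      have hmn : m n ≤ r n := by
        have := hr n
        simp only [hmdef]
        omega
      exact ⟨fun v => degree_pos n (m n) hm2 hn v,
             fun v => le_trans (degree_le n (m n) hm2 hn v) hmn⟩
    · have hm_top : Filter.Tendsto m Filter.atTop Filter.atTop := by
        rw [Filter.tendsto_atTop]
        intro b
        filter_upwards [htop.eventually_ge_atTop b, Filter.eventually_ge_atTop b]
          with n hn1 hn2
        simp only [hmdef]
        omega
      have key : Filter.Tendsto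
          (fun n => ((augAdj (cliqueGraph n (m n))).rank : ℝ) / n)
          Filter.atTop (nhds 0) := by
        have t1 : Filter.Tendsto (fun n => 1 / ((m n : ℕ) : ℝ) + 1 / (n : ℝ))
            Filter.atTop (nhds 0) := by
          have a1 : Filter.Tendsto (fun n => 1 / ((m n : ℕ) : ℝ))
              Filter.atTop (nhds 0) := tendsto_one_div_atTop_nhds_zero_nat.comp hm_top
          simpa using a1.add tendsto_one_div_atTop_nhds_zero_nat
        apply squeeze_zero' ?_ ?_ t1
        · filter_upwards with n
          positivity
        · filter_upwards [Filter.eventually_ge_atTop 1] with n hn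
          have hn0 : (0 : ℝ) < n := by exact_mod_cast hn
          have hm2 : 2 ≤ m n := le_max_left _ _
          have hm0 : (0 : ℝ) < (m n : ℝ) := by
            have : (0:ℕ) < m n := by omega
            exact_mod_cast this
          have hrk := rank_cliqueGraph_le n (m n)
          have c1 : ((augAdj (cliqueGraph n (m n))).rank : ℝ) ≤
              (((n - 2) / m n : ℕ) : ℝ) + 1 := by exact_mod_cast hrk
          have c2 : (((n - 2) / m n : ℕ) : ℝ) ≤ (n : ℝ) / (m n) := by
            refine le_trans Nat.cast_div_le ?_
            gcongr
            exact_mod_cast Nat.sub_le n 2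
          have c3 : ((augAdj (cliqueGraph n (m n))).rank : ℝ) ≤ (n : ℝ) / (m n) + 1 :=
            c1.trans (by linarith)
          calc ((augAdj (cliqueGraph n (m n))).rank : ℝ) / n
              ≤ ((n : ℝ) / (m n) + 1) / n := by gcongr
            _ = 1 / (m n : ℝ) + 1 / (n : ℝ) := by field_simp
      have := key.const_sub 1
      simpa using this
  · rintro ⟨G, hG, hrate⟩
    rw [Filter.tendsto_atTop]
    intro R
    have h0 : Filter.Tendsto (fun n => ((augAdj (G n)).rank : ℝ) / n)
        Filter.atTop (nhds 0) := by
      have := hrate.const_sub 1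
      simpa using this
    have hpos : (0 : ℝ) < 1 / (R + 1) := by positivity
    filter_upwards [h0.eventually_lt_const hpos, Filter.eventually_ge_atTop 2]
      with n hn1 hn2
    have hkey : n ≤ (augAdj (G n)).rank * (r n + 1) :=
      rank_lower n (G n) (r n) (hG n hn2).2
    set K := (augAdj (G n)).rank with hK
    have hn0 : (0 : ℝ) < n := by
      have : (0:ℕ) < n := by omega
      exact_mod_cast this
    rw [div_lt_div_iff₀ hn0 (by positivity)] at hn1
    have hnat : K * (R + 1) < n := by
      rw [one_mul] at hn1
      exact_mod_cast hn1
    have hKpos : 0 < K := by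
      rcases Nat.eq_zero_or_pos K with h | h
      · rw [h] at hkey; omega
      · exact h
    have hlt : K * (R + 1) < K * (r n + 1) := lt_of_lt_of_le hnat hkey
    have := Nat.lt_of_mul_lt_mul_left hlt
    omega
end
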